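/- arXiv:1109.3928 — 7 statements merged into one kernel-verified Lean document; each statement's English description precedes it below -/
import Mathlib

section
/- For n ≡ 0 (mod 4) and m ≡ 0 (mod 4) with n, m ≥ 4, the total domination number and the paired domination number of the toroidal mesh C_n × C_m both equal nm/4. -/
open SimpleGraph

/-- The toroidal mesh `C_n × C_m`: Cartesian product of two cycles, with
vertex set `ZMod n × ZMod m`. -/
def torusGraph (n m : ℕ) : SimpleGraph (ZMod n × ZMod m) where
  Adj a b := a ≠ b ∧ ((a.1 = b.1 ∧ (a.2 = b.2 + 1 ∨ b.2 = a.2 + 1)) ∨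
    (a.2 = b.2 ∧ (a.1 = b.1 + 1 ∨ b.1 = a.1 + 1)))
  symm := by
    constructor
    intro a b h
    obtain ⟨hne, h⟩ := h
    refine ⟨hne.symm, ?_⟩
    rcases h with ⟨h1, h2⟩ | ⟨h1, h2⟩
    · exact Or.inl ⟨h1.symm, h2.symm⟩
    · exact Or.inr ⟨h1.symm, h2.symm⟩
  loopless := by constructor; intro a h; exact h.1 rfl

/-- `D` is a total dominating set of `G`: every vertex has a neighbor in `D`. -/
def IsTotalDomSet {V : Type*} (G : SimpleGraph V) (D : Set V) : Prop :=
  ∀ v : V, ∃ u ∈ D, G.Adj v u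

/-- `D` is a dominating set of `G`: every vertex outside `D` has a neighbor in `D`. -/
def IsDomSet {V : Type*} (G : SimpleGraph V) (D : Set V) : Prop :=
  ∀ v : V, v ∉ D → ∃ u ∈ D, G.Adj v u

/-- `D` is a paired dominating set: a dominating set whose induced subgraph
has a perfect matching. -/
def IsPairedDomSet {V : Type*} (G : SimpleGraph V) (D : Set V) : Prop :=
  IsDomSet G D ∧ ∃ M : (G.induce D).Subgraph, M.IsPerfectMatching

/-- The total domination number. -/
noncomputable def totalDomNum {V : Type*} (G : SimpleGraph V) : ℕ :=
  sInf {k | ∃ D : Set V, IsTotalDomSet G D ∧ D.ncard = k}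

/-- The paired domination number. -/
noncomputable def pairedDomNum {V : Type*} (G : SimpleGraph V) : ℕ :=
  sInf {k | ∃ D : Set V, IsPairedDomSet G D ∧ D.ncard = k}

/-- The domination number. -/
noncomputable def domNum {V : Type*} (G : SimpleGraph V) : ℕ :=
  sInf {k | ∃ D : Set V, IsDomSet G D ∧ D.ncard = k}

def S4 : Finset (ZMod 4 × ZMod 4) := {(0,0),(1,0),(2,2),(3,2)}

def lift4 : Fin 4 → ZMod 4 × ZMod 4 := ![(1,0),(-1,0),(0,1),(0,-1)]

def negIdx : Fin 4 → Fin 4 := ![1,0,3,2]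

def eS (r : ZMod 4 × ZMod 4) : Fin 4 :=
  if r - lift4 0 ∈ S4 then 0 else if r - lift4 1 ∈ S4 then 1
  else if r - lift4 2 ∈ S4 then 2 else 3

lemma hF1 : ∀ r : ZMod 4 × ZMod 4, r - lift4 (eS r) ∈ S4 := by decide
lemma hF2 : ∀ (r : ZMod 4 × ZMod 4) (i : Fin 4), r - lift4 i ∈ S4 → i = eS r := by decide
lemma hF3 : ∀ r ∈ S4, eS (r - lift4 (eS r)) = negIdx (eS r) := by decide
lemma lift4_negIdx : ∀ i, lift4 (negIdx i) = - lift4 i := by decide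

def liftO (n m : ℕ) : Fin 4 → ZMod n × ZMod m := ![(1,0),(-1,0),(0,1),(0,-1)]

lemma liftO_negIdx (n m : ℕ) : ∀ i, liftO n m (negIdx i) = - liftO n m i := by
  intro i; fin_cases i <;> simp [liftO, negIdx, Prod.ext_iff]

def resMap (n m : ℕ) (dn : 4 ∣ n) (dm : 4 ∣ m) (p : ZMod n × ZMod m) : ZMod 4 × ZMod 4 :=
  (ZMod.castHom dn (ZMod 4) p.1, ZMod.castHom dm (ZMod 4) p.2)

lemma resMap_add (n m : ℕ) (dn : 4 ∣ n) (dm : 4 ∣ m) (v w : ZMod n × ZMod m) :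
    resMap n m dn dm (v + w) = resMap n m dn dm v + resMap n m dn dm w := by
  simp [resMap, Prod.ext_iff, ZMod.cast_add dn, ZMod.cast_add dm]

lemma resMap_sub (n m : ℕ) (dn : 4 ∣ n) (dm : 4 ∣ m) (v w : ZMod n × ZMod m) :
    resMap n m dn dm (v - w) = resMap n m dn dm v - resMap n m dn dm w := by
  simp [resMap, Prod.ext_iff, ZMod.cast_sub dn, ZMod.cast_sub dm]

lemma resMap_liftO (n m : ℕ) (dn : 4 ∣ n) (dm : 4 ∣ m) (i : Fin 4) :
    resMap n m dn dm (liftO n m i) = lift4 i := by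
  fin_cases i <;>
    simp [resMap, liftO, lift4, Prod.ext_iff, ZMod.cast_one dn, ZMod.cast_one dm,
      ZMod.cast_neg dn, ZMod.cast_neg dm]

lemma adj_iff (n m : ℕ) (hn : 4 ≤ n) (hm : 4 ≤ m) (v u : ZMod n × ZMod m) :
    (torusGraph n m).Adj v u ↔ ∃ i : Fin 4, u = v + liftO n m i := by
  haveI : Fact (1 < n) := ⟨by omega⟩
  haveI : Fact (1 < m) := ⟨by omega⟩
  constructor
  · rintro ⟨hne, ⟨h1, h2 | h2⟩ | ⟨h1, h2 | h2⟩⟩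
    · refine ⟨3, ?_⟩
      rw [Prod.ext_iff]
      refine ⟨by simpa [liftO] using h1.symm, ?_⟩
      simp only [liftO]; simp; rw [h2]; ring
    · refine ⟨2, ?_⟩
      rw [Prod.ext_iff]
      exact ⟨by simpa [liftO] using h1.symm, by simp [liftO, h2]⟩
    · refine ⟨1, ?_⟩
      rw [Prod.ext_iff]
      refine ⟨?_, by simpa [liftO] using h1.symm⟩
      simp only [liftO]; simp; rw [h2]; ring
    · refine ⟨0, ?_⟩
      rw [Prod.ext_iff]
      exact ⟨by simp [liftO, h2], by simpa [liftO] using h1.symm⟩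
  · rintro ⟨i, rfl⟩
    fin_cases i
    · refine ⟨fun h => ?_, Or.inr ⟨by simp [liftO], Or.inr (by simp [liftO])⟩⟩
      have := congrArg Prod.fst h
      simp [liftO] at this
    · refine ⟨fun h => ?_, Or.inr ⟨by simp [liftO], Or.inl (by simp [liftO])⟩⟩
      have := congrArg Prod.fst h
      simp [liftO, sub_eq_add_neg] at this
    · refine ⟨fun h => ?_, Or.inl ⟨by simp [liftO], Or.inr (by simp [liftO])⟩⟩
      have := congrArg Prod.snd h
      simp [liftO] at this
    · refine ⟨fun h => ?_, Or.inl ⟨by simp [liftO], Or.inl (by simp [liftO])⟩⟩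
      have := congrArg Prod.snd h
      simp [liftO, sub_eq_add_neg] at this

def Ptn (n m : ℕ) (dn : 4 ∣ n) (dm : 4 ∣ m) : Set (ZMod n × ZMod m) :=
  {p | resMap n m dn dm p ∈ S4}

noncomputable def prt (n m : ℕ) (dn : 4 ∣ n) (dm : 4 ∣ m) (v : ZMod n × ZMod m) :
    ZMod n × ZMod m :=
  v - liftO n m (eS (resMap n m dn dm v))

lemma prt_mem (n m : ℕ) (dn : 4 ∣ n) (dm : 4 ∣ m) (v : ZMod n × ZMod m) :
    prt n m dn dm v ∈ Ptn n m dn dm := by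
  show resMap n m dn dm _ ∈ S4
  rw [prt, resMap_sub, resMap_liftO]
  exact hF1 _

lemma prt_adj (n m : ℕ) (hn : 4 ≤ n) (hm : 4 ≤ m) (dn : 4 ∣ n) (dm : 4 ∣ m)
    (v : ZMod n × ZMod m) : (torusGraph n m).Adj v (prt n m dn dm v) := by
  rw [adj_iff n m hn hm]
  exact ⟨negIdx (eS (resMap n m dn dm v)), by rw [liftO_negIdx, prt, sub_eq_add_neg]⟩

lemma prt_prt (n m : ℕ) (dn : 4 ∣ n) (dm : 4 ∣ m) (v : ZMod n × ZMod m)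
    (hv : v ∈ Ptn n m dn dm) : prt n m dn dm (prt n m dn dm v) = v := by
  have hr : resMap n m dn dm (prt n m dn dm v)
      = resMap n m dn dm v - lift4 (eS (resMap n m dn dm v)) := by
    rw [prt, resMap_sub, resMap_liftO]
  rw [prt, hr, hF3 _ hv, liftO_negIdx, prt]
  ring

lemma Ptn_total (n m : ℕ) (hn : 4 ≤ n) (hm : 4 ≤ m) (dn : 4 ∣ n) (dm : 4 ∣ m) :
    IsTotalDomSet (torusGraph n m) (Ptn n m dn dm) :=
  fun v => ⟨prt n m dn dm v, prt_mem n m dn dm v, prt_adj n m hn hm dn dm v⟩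

lemma Ptn_card (n m : ℕ) (hn : 4 ≤ n) (hm : 4 ≤ m) (dn : 4 ∣ n) (dm : 4 ∣ m) :
    (Ptn n m dn dm).ncard = n * m / 4 := by
  haveI : NeZero n := ⟨by omega⟩
  haveI : NeZero m := ⟨by omega⟩
  haveI := Fintype.ofFinite ↥(Ptn n m dn dm)
  set D := Ptn n m dn dm with hD
  have hbij : Function.Bijective
      (fun p : ↥D × Fin 4 => (↑p.1 : ZMod n × ZMod m) + liftO n m p.2) := by
    constructor
    · rintro ⟨⟨d, hd⟩, i⟩ ⟨⟨d', hd'⟩, j⟩ he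
      simp only at he
      have hdi : d = (d + liftO n m i) - liftO n m i := by ring
      have hdj : d' = (d + liftO n m i) - liftO n m j := by rw [he]; ring
      have h1 : resMap n m dn dm (d + liftO n m i) - lift4 i ∈ S4 := by
        rw [← resMap_liftO n m dn dm i, ← resMap_sub, ← hdi]; exact hd
      have h2 : resMap n m dn dm (d + liftO n m i) - lift4 j ∈ S4 := by
        rw [← resMap_liftO n m dn dm j, ← resMap_sub, ← hdj]; exact hd'
      have hij : i = j := (hF2 _ _ h1).trans (hF2 _ _ h2).symm
      subst hij
      have : d = d' := by rw [hdi, hdj]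
      simp [this]
    · intro v
      refine ⟨(⟨prt n m dn dm v, prt_mem n m dn dm v⟩, eS (resMap n m dn dm v)), ?_⟩
      show prt n m dn dm v + liftO n m (eS (resMap n m dn dm v)) = v
      rw [prt]; ring
  have hcard := Fintype.card_congr (Equiv.ofBijective _ hbij)
  rw [Fintype.card_prod, Fintype.card_prod, Fintype.card_fin, ZMod.card, ZMod.card] at hcard
  have hnc : D.ncard = Fintype.card ↥D := by
    rw [← Nat.card_coe_set_eq, Nat.card_eq_fintype_card]
  obtain ⟨q, hq⟩ : ∃ q, Fintype.card ↥D = q := ⟨_, rfl⟩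
  rw [hnc, hq]
  omega

lemma Ptn_paired (n m : ℕ) (hn : 4 ≤ n) (hm : 4 ≤ m) (dn : 4 ∣ n) (dm : 4 ∣ m) :
    IsPairedDomSet (torusGraph n m) (Ptn n m dn dm) := by
  set D := Ptn n m dn dm with hD
  refine ⟨fun v _ => Ptn_total n m hn hm dn dm v, ?_⟩
  refine ⟨⟨Set.univ, fun x y => prt n m dn dm ↑x = ↑y ∨ prt n m dn dm ↑y = ↑x,
    ?_, ?_, ?_⟩, ?_, fun v => Set.mem_univ v⟩
  · rintro x y (h | h)
    · show (torusGraph n m).Adj ↑x ↑y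
      rw [← h]; exact prt_adj n m hn hm dn dm ↑x
    · show (torusGraph n m).Adj ↑x ↑y
      rw [← h]; exact ((torusGraph n m).symm.symm _ _ (prt_adj n m hn hm dn dm ↑y))
  · intro x y _
    exact Set.mem_univ x
  · constructor
    rintro x y (h | h)
    · exact Or.inr h
    · exact Or.inl h
  · rintro ⟨v, hv⟩ _
    refine ⟨⟨prt n m dn dm v, prt_mem n m dn dm v⟩, Or.inl rfl, ?_⟩
    rintro ⟨y, hy⟩ (h | h)
    · exact Subtype.ext h.symm
    · refine Subtype.ext ?_
      show y = prt n m dn dm v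
      rw [← prt_prt n m dn dm y hy, h]

lemma total_lower (n m : ℕ) (hn : 4 ≤ n) (hm : 4 ≤ m) (D : Set (ZMod n × ZMod m))
    (hD : IsTotalDomSet (torusGraph n m) D) : n * m ≤ 4 * D.ncard := by
  haveI : NeZero n := ⟨by omega⟩
  haveI : NeZero m := ⟨by omega⟩
  haveI := Fintype.ofFinite ↥D
  have hex : ∀ v : ZMod n × ZMod m, ∃ p : ↥D × Fin 4,
      v = (↑p.1 : ZMod n × ZMod m) - liftO n m p.2 := by
    intro v
    obtain ⟨u, hu, hadj⟩ := hD v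
    obtain ⟨i, hi⟩ := (adj_iff n m hn hm v u).mp hadj
    have hv : v = u - liftO n m i := by rw [hi]; ring
    exact ⟨(⟨u, hu⟩, i), hv⟩
  have hinj : Function.Injective (fun v => Classical.choose (hex v)) := by
    intro v v' he
    have h1 := Classical.choose_spec (hex v)
    have h2 := Classical.choose_spec (hex v')
    rw [h1, h2]
    simp only at he
    rw [he]
  have hcard := Fintype.card_le_of_injective _ hinj
  rw [Fintype.card_prod, Fintype.card_prod, Fintype.card_fin, ZMod.card, ZMod.card] at hcard
  have hnc : D.ncard = Fintype.card ↥D := by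
    rw [← Nat.card_coe_set_eq, Nat.card_eq_fintype_card]
  obtain ⟨q, hq⟩ : ∃ q, Fintype.card ↥D = q := ⟨_, rfl⟩
  rw [hnc, hq]
  rw [hq] at hcard
  omega

lemma paired_is_total (n m : ℕ) (D : Set (ZMod n × ZMod m))
    (hD : IsPairedDomSet (torusGraph n m) D) : IsTotalDomSet (torusGraph n m) D := by
  obtain ⟨hdom, M, hM, hSp⟩ := hD
  intro v
  by_cases hv : v ∈ D
  · obtain ⟨w, hw, -⟩ := hM (hSp ⟨v, hv⟩)
    exact ⟨↑w, w.2, M.adj_sub hw⟩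
  · exact hdom v hv

theorem stmt2 (n m : ℕ) (hn : 4 ≤ n) (hm : 4 ≤ m) (h1 : n % 4 = 0) (h2 : m % 4 = 0) :
    totalDomNum (torusGraph n m) = n * m / 4 ∧
    pairedDomNum (torusGraph n m) = n * m / 4 := by
  have dn : 4 ∣ n := Nat.dvd_of_mod_eq_zero h1
  have dm : 4 ∣ m := Nat.dvd_of_mod_eq_zero h2
  have hlow : ∀ k, (∃ D : Set (ZMod n × ZMod m),
      IsTotalDomSet (torusGraph n m) D ∧ D.ncard = k) → n * m / 4 ≤ k := by
    rintro k ⟨D, hD, rfl⟩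
    have h := total_lower n m hn hm D hD
    obtain ⟨r, hr⟩ : 4 ∣ n * m := dn.mul_right m
    rw [hr] at h ⊢
    omega
  constructor
  · have hmem : n * m / 4 ∈ {k | ∃ D : Set (ZMod n × ZMod m),
        IsTotalDomSet (torusGraph n m) D ∧ D.ncard = k} :=
      ⟨Ptn n m dn dm, Ptn_total n m hn hm dn dm, Ptn_card n m hn hm dn dm⟩
    exact le_antisymm (Nat.sInf_le hmem) (le_csInf ⟨_, hmem⟩ fun k hk => hlow k hk)
  · have hmem : n * m / 4 ∈ {k | ∃ D : Set (ZMod n × ZMod m),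
        IsPairedDomSet (torusGraph n m) D ∧ D.ncard = k} :=
      ⟨Ptn n m dn dm, Ptn_paired n m hn hm dn dm, Ptn_card n m hn hm dn dm⟩
    refine le_antisymm (Nat.sInf_le hmem) (le_csInf ⟨_, hmem⟩ ?_)
    rintro k ⟨D, hD, rfl⟩
    exact hlow _ ⟨D, paired_is_total n m D hD, rfl⟩
end

section
/- For all n ≥ 3, the total domination number of the toroidal mesh C_n × C_3 equals ⌈4n/5⌉. -/
open SimpleGraph

def Pcond (A B C : Finset (ZMod 3)) : Prop :=
  ∀ ρ : ZMod 3, ρ ∈ A ∨ ρ ∈ C ∨ ∃ σ ∈ B, σ ≠ ρ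

instance (A B C : Finset (ZMod 3)) : Decidable (Pcond A B C) := by
  unfold Pcond; infer_instance

def pat (n k : ℕ) : Finset (ZMod 3) :=
  if n % 5 = 3 ∧ k = n - 1 then {0}
  else if k % 5 = 2 then ∅
  else if k % 5 = 3 then {1, 2}
  else if k % 5 = 4 then ∅
  else {0}

set_option maxHeartbeats 1000000 in
lemma pat_key {n : ℕ} (hn : 3 ≤ n) (k : ℕ) (hk : k < n) :
    Pcond (pat n ((k + (n - 1)) % n)) (pat n k) (pat n ((k + 1) % n)) := by
  by_cases h1 : k = n - 1
  · subst h1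
    have e1 : (n - 1 + 1) % n = 0 := by rw [show n - 1 + 1 = n by omega]; exact Nat.mod_self n
    have e2 : (n - 1 + (n - 1)) % n = n - 1 - 1 := by
      rw [show n - 1 + (n - 1) = n + (n - 1 - 1) by omega, Nat.add_mod_left]
      exact Nat.mod_eq_of_lt (by omega)
    rw [e1, e2]
    unfold pat
    split_ifs <;> first | decide | (exfalso; first | assumption | omega)
  · have e1 : (k + 1) % n = k + 1 := Nat.mod_eq_of_lt (by omega)
    by_cases h0 : k = 0
    · subst h0
      have e2 : (0 + (n - 1)) % n = n - 1 := by
        rw [Nat.zero_add]; exact Nat.mod_eq_of_lt (by omega)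
      rw [e1, e2]
      unfold pat
      split_ifs <;> first | decide | (exfalso; first | assumption | omega)
    · have e2 : (k + (n - 1)) % n = k - 1 := by
        rw [show k + (n - 1) = n + (k - 1) by omega, Nat.add_mod_left]
        exact Nat.mod_eq_of_lt (by omega)
      rw [e1, e2]
      unfold pat
      split_ifs <;> first | decide | (exfalso; first | assumption | omega)

def enc (A : Finset (ZMod 3)) : ℕ :=
  (if (0 : ZMod 3) ∈ A then 1 else 0) + (if (1 : ZMod 3) ∈ A then 2 else 0)
    + (if (2 : ZMod 3) ∈ A then 4 else 0)

def tbl (a b : ℕ) : ℕ :=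
  if a = 0 then (if b = 7 then 8 else if b = 3 ∨ b = 5 ∨ b = 6 then 6 else 4)
  else if a = 1 then (if b % 2 = 1 then 3 else 2)
  else if a = 2 then (if b / 2 % 2 = 1 then 3 else 2)
  else if a = 4 then (if 4 ≤ b then 3 else 2)
  else 0

def psi (A B : Finset (ZMod 3)) : ℕ := tbl (enc A) (enc B)

lemma psi_key : ∀ A B C : Finset (ZMod 3), Pcond A B C →
    4 + psi A B ≤ 5 * B.card + psi B C := by decide

lemma zmod3_adj : ∀ σ ρ : ZMod 3, σ ≠ ρ → ρ = σ + 1 ∨ σ = ρ + 1 := by decide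

lemma zmod3_ne : ∀ ρ σ : ZMod 3, (ρ = σ + 1 ∨ σ = ρ + 1) → σ ≠ ρ := by decide

lemma tds_iff {n : ℕ} (hn : 3 ≤ n) (f : ZMod n → Finset (ZMod 3)) :
    IsTotalDomSet (torusGraph n 3) {p : ZMod n × ZMod 3 | p.2 ∈ f p.1} ↔
      ∀ i, Pcond (f (i - 1)) (f i) (f (i + 1)) := by
  haveI : NeZero n := ⟨by omega⟩
  haveI : Fact (1 < n) := ⟨by omega⟩
  have h10 : (1 : ZMod n) ≠ 0 := one_ne_zero
  constructor
  · intro h i ρ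
    obtain ⟨u, hu, hadj⟩ := h (i, ρ)
    obtain ⟨i', σ⟩ := u
    obtain ⟨hne, hor⟩ := hadj
    rcases hor with ⟨h1, h2⟩ | ⟨h1, h2⟩
    · simp only at h1 h2
      right; right
      refine ⟨σ, ?_, zmod3_ne ρ σ h2⟩
      rw [h1]; exact hu
    · simp only at h1 h2
      rcases h2 with h2 | h2
      · left
        have hi : i' = i - 1 := by rw [h2]; ring
        rw [← hi, h1]; exact hu
      · right; left
        rw [← h2, h1]; exact hu
  · intro h v
    obtain ⟨i, ρ⟩ := v
    rcases h i ρ with hA | hC | ⟨σ, hσ, hne⟩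
    · refine ⟨(i - 1, ρ), hA, ?_, Or.inr ⟨rfl, Or.inl (by ring)⟩⟩
      intro hc
      have hi : i = i - 1 := congrArg Prod.fst hc
      exact h10 (by linear_combination hi)
    · refine ⟨(i + 1, ρ), hC, ?_, Or.inr ⟨rfl, Or.inr rfl⟩⟩
      intro hc
      have hi : i = i + 1 := congrArg Prod.fst hc
      exact h10 (by linear_combination -hi)
    · refine ⟨(i, σ), hσ, ?_, Or.inl ⟨rfl, zmod3_adj σ ρ hne⟩⟩
      intro hc
      exact hne (congrArg Prod.snd hc).symm

lemma ncard_eq {n : ℕ} [NeZero n] (f : ZMod n → Finset (ZMod 3)) :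
    {p : ZMod n × ZMod 3 | p.2 ∈ f p.1}.ncard = ∑ i, (f i).card := by
  classical
  have hset : {p : ZMod n × ZMod 3 | p.2 ∈ f p.1}
      = ↑(Finset.univ.filter fun p : ZMod n × ZMod 3 => p.2 ∈ f p.1) := by
    ext p; simp
  rw [hset, Set.ncard_coe_finset, Finset.card_filter, Fintype.sum_prod_type]
  refine Finset.sum_congr rfl fun i _ => ?_
  rw [← Finset.card_filter]
  congr 1
  ext r; simp

lemma lower_bound {n : ℕ} (hn : 3 ≤ n) (D : Set (ZMod n × ZMod 3))
    (hD : IsTotalDomSet (torusGraph n 3) D) : 4 * n ≤ 5 * D.ncard := by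
  classical
  haveI : NeZero n := ⟨by omega⟩
  set F : ZMod n → Finset (ZMod 3) := fun i => Finset.univ.filter fun r => (i, r) ∈ D with hF
  have hDF : D = {p : ZMod n × ZMod 3 | p.2 ∈ F p.1} := by
    ext ⟨i, r⟩; simp [hF]
  rw [hDF] at hD ⊢
  rw [ncard_eq]
  have hp := (tds_iff hn F).mp hD
  have hsum : ∑ i : ZMod n, (4 + psi (F (i - 1)) (F i))
      ≤ ∑ i : ZMod n, (5 * (F i).card + psi (F i) (F (i + 1))) :=
    Finset.sum_le_sum fun i _ => psi_key _ _ _ (hp i)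
  rw [Finset.sum_add_distrib, Finset.sum_add_distrib] at hsum
  have hshift : ∑ i : ZMod n, psi (F i) (F (i + 1))
      = ∑ i : ZMod n, psi (F (i - 1)) (F i) := by
    apply Fintype.sum_equiv (Equiv.addRight (1 : ZMod n))
    intro x; simp
  rw [← hshift] at hsum
  have h4 : (∑ _i : ZMod n, 4) = 4 * n := by
    simp [Finset.sum_const, Finset.card_univ, ZMod.card, mul_comm]
  have h5 : ∑ i : ZMod n, 5 * (F i).card = 5 * ∑ i : ZMod n, (F i).card := by
    rw [Finset.mul_sum]
  rw [h4, h5] at hsum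
  omega

lemma pat_pcond {n : ℕ} (hn : 3 ≤ n) :
    ∀ i : ZMod n, Pcond (pat n (i - 1).val) (pat n i.val) (pat n (i + 1).val) := by
  haveI : NeZero n := ⟨by omega⟩
  haveI : Fact (1 < n) := ⟨by omega⟩
  intro i
  have hv : i.val < n := ZMod.val_lt i
  have e1 : (i + 1).val = (i.val + 1) % n := by
    rw [ZMod.val_add, ZMod.val_one]
  have e2 : (i - 1).val = (i.val + (n - 1)) % n := by
    have hcast : ((n - 1 : ℕ) : ZMod n) = -1 := by
      rw [Nat.cast_sub (by omega : 1 ≤ n), ZMod.natCast_self, Nat.cast_one]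
      ring
    have h3 : i - 1 = i + ((n - 1 : ℕ) : ZMod n) := by rw [hcast]; ring
    rw [h3, ZMod.val_add, ZMod.val_cast_of_lt (by omega : n - 1 < n)]
  rw [e1, e2]
  exact pat_key hn i.val hv

def bcard (k : ℕ) : ℕ :=
  if k % 5 = 2 then 0 else if k % 5 = 3 then 2 else if k % 5 = 4 then 0 else 1

lemma sum_bcard (m : ℕ) : ∑ k ∈ Finset.range m, bcard k
    = 4 * (m / 5) + (if m % 5 = 1 then 1 else if m % 5 = 2 then 2
        else if m % 5 = 3 then 2 else if m % 5 = 4 then 4 else 0) := by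
  induction m with
  | zero => simp
  | succ m ih =>
      rw [Finset.sum_range_succ, ih]
      unfold bcard
      split_ifs <;> omega

lemma pat_card_eq {n k : ℕ} (h : ¬(n % 5 = 3 ∧ k = n - 1)) :
    (pat n k).card = bcard k := by
  unfold pat bcard
  rw [if_neg h]
  split_ifs <;> decide

lemma pat_sum {n : ℕ} [NeZero n] (hn : 3 ≤ n) :
    ∑ i : ZMod n, (pat n i.val).card = (4 * n + 4) / 5 := by
  have hbij : ∑ i : ZMod n, (pat n i.val).card
      = ∑ k ∈ Finset.range n, (pat n k).card := by
    refine Finset.sum_nbij' (fun i => i.val) (fun k => (k : ZMod n)) ?_ ?_ ?_ ?_ ?_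
    · intro i _; exact Finset.mem_range.mpr (ZMod.val_lt i)
    · intro k _; exact Finset.mem_univ _
    · intro i _; exact ZMod.natCast_rightInverse i
    · intro k hk; exact ZMod.val_cast_of_lt (Finset.mem_range.mp hk)
    · intro i _; rfl
  rw [hbij]
  rcases Decidable.em (n % 5 = 3) with h3 | h3
  · obtain ⟨m, rfl⟩ : ∃ m, n = m + 1 := ⟨n - 1, by omega⟩
    rw [Finset.sum_range_succ]
    have hlast : (pat (m + 1) m).card = 1 := by
      unfold pat
      rw [if_pos ⟨h3, by omega⟩]
      decide
    have hrest : ∑ k ∈ Finset.range m, (pat (m + 1) k).card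
        = ∑ k ∈ Finset.range m, bcard k := by
      refine Finset.sum_congr rfl fun k hk => ?_
      exact pat_card_eq (by have := Finset.mem_range.mp hk; omega)
    rw [hlast, hrest, sum_bcard]
    split_ifs <;> omega
  · have hrest : ∑ k ∈ Finset.range n, (pat n k).card
        = ∑ k ∈ Finset.range n, bcard k :=
      Finset.sum_congr rfl fun k _ => pat_card_eq (by omega)
    rw [hrest, sum_bcard]
    split_ifs <;> omega

theorem stmt3 (n : ℕ) (hn : 3 ≤ n) :
    totalDomNum (torusGraph n 3) = (4 * n + 4) / 5 := by
  classical
  haveI : NeZero n := ⟨by omega⟩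
  have hwit : (4 * n + 4) / 5 ∈
      {k | ∃ D : Set (ZMod n × ZMod 3), IsTotalDomSet (torusGraph n 3) D ∧ D.ncard = k} := by
    refine ⟨{p : ZMod n × ZMod 3 | p.2 ∈ pat n p.1.val}, ?_, ?_⟩
    · exact (tds_iff hn fun i => pat n i.val).mpr (pat_pcond hn)
    · rw [ncard_eq fun i => pat n i.val]
      exact pat_sum hn
  apply le_antisymm
  · exact Nat.sInf_le hwit
  · apply le_csInf ⟨_, hwit⟩
    rintro k ⟨D, hD, rfl⟩
    have := lower_bound hn D hD
    omega
end

section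
/- For all n ≥ 3, the paired domination number of C_n × C_3 equals ⌈4n/5⌉ if n ≡ 0, 2, or 4 (mod 5), and equals ⌈4n/5⌉ + 1 if n ≡ 1 or 3 (mod 5). -/
open SimpleGraph

def colOK (A B C : Finset (ZMod 3)) : Prop :=
  (B = ∅ → ∀ j : ZMod 3, j ∈ A ∪ C) ∧ (∀ r : ZMod 3, B = {r} → r ∈ A ∪ C)

instance (A B C : Finset (ZMod 3)) : Decidable (colOK A B C) := by
  unfold colOK; infer_instance

def phi (A B : Finset (ZMod 3)) : ℤ :=
  if 2 ≤ B.card then 0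
  else if B.card = 1 then
    (if A = ∅ then -3 else if A.card = 1 then (if A = B then -2 else -1) else 0)
  else if A = ∅ then -8 else if A.card = 1 then -6 else -4

theorem phi_key : ∀ A B C : Finset (ZMod 3), colOK A B C →
    0 ≤ phi A B + 5 * (C.card : ℤ) - 4 - phi B C := by decide

theorem abstract_lower (n : ℕ) [NeZero n] (S : ZMod n → Finset (ZMod 3))
    (h : ∀ i, colOK (S (i - 1)) (S i) (S (i + 1))) :
    4 * n ≤ 5 * ∑ i : ZMod n, (S i).card := by
  have key : (0:ℤ) ≤ ∑ i : ZMod n,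
      (phi (S (i-1)) (S i) + 5 * ((S (i+1)).card : ℤ) - 4 - phi (S i) (S (i+1))) :=
    Finset.sum_nonneg fun i _ => phi_key _ _ _ (h i)
  have e1 : ∑ i : ZMod n, phi (S (i-1)) (S i) = ∑ i : ZMod n, phi (S i) (S (i+1)) := by
    apply Fintype.sum_equiv (Equiv.subRight (1 : ZMod n))
    intro i
    simp [Equiv.subRight_apply, sub_add_cancel]
  have e2 : ∑ i : ZMod n, ((S (i+1)).card : ℤ) = ∑ i : ZMod n, ((S i).card : ℤ) := by
    apply Fintype.sum_equiv (Equiv.addRight (1 : ZMod n))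
    intro i; rfl
  have hcard : (Finset.univ : Finset (ZMod n)).card = n := by
    simp [ZMod.card]
  rw [show ∑ i : ZMod n,
      (phi (S (i-1)) (S i) + 5 * ((S (i+1)).card : ℤ) - 4 - phi (S i) (S (i+1)))
      = (∑ i : ZMod n, phi (S (i-1)) (S i)) + 5 * (∑ i : ZMod n, ((S (i+1)).card : ℤ))
        - 4 * n - ∑ i : ZMod n, phi (S i) (S (i+1)) by
    rw [Finset.sum_sub_distrib, Finset.sum_sub_distrib, Finset.sum_add_distrib,
      ← Finset.mul_sum, Finset.sum_const, hcard, nsmul_eq_mul, mul_comm (n:ℤ) 4]] at key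
  rw [e1, e2] at key
  have h2 : (4:ℤ) * n ≤ 5 * ∑ i : ZMod n, ((S i).card : ℤ) := by linarith
  push_cast at h2
  exact_mod_cast h2
theorem lower_core (n : ℕ) (hn : 3 ≤ n) (D : Set (ZMod n × ZMod 3))
    (hD : IsPairedDomSet (torusGraph n 3) D) :
    4 * n ≤ 5 * D.ncard ∧ Even D.ncard := by
  haveI : NeZero n := ⟨by omega⟩
  classical
  set S : ZMod n → Finset (ZMod 3) := fun i => Finset.univ.filter (fun j => (i, j) ∈ D) with hS
  have memS : ∀ i j, j ∈ S i ↔ (i, j) ∈ D := by intro i j; simp [hS]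
  have hcol : ∀ i, colOK (S (i - 1)) (S i) (S (i + 1)) := by
    intro i
    constructor
    · intro hB j
      have hv : (i, j) ∉ D := by
        intro h; rw [← memS] at h; rw [hB] at h; simp at h
      obtain ⟨u, hu, hne, hcase⟩ := hD.1 _ hv
      rcases hcase with ⟨h1, -⟩ | ⟨h2, h3⟩
      · exfalso
        replace h1 : i = u.1 := h1
        have : u.2 ∈ S i := by rw [memS]; rw [h1]; exact hu
        rw [hB] at this; simp at this
      · replace h2 : j = u.2 := h2
        rw [Finset.mem_union]
        rcases h3 with h3 | h3
        · left
          replace h3 : i = u.1 + 1 := h3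
          have hu1 : u.1 = i - 1 := by rw [h3]; ring
          rw [memS, ← hu1, h2]
          exact hu
        · right
          replace h3 : u.1 = i + 1 := h3
          rw [memS, ← h3, h2]
          exact hu
    · intro r hB
      have hr : (i, r) ∈ D := by rw [← memS, hB]; exact Finset.mem_singleton_self r
      obtain ⟨M, hM⟩ := hD.2
      have hv : (⟨(i, r), hr⟩ : D) ∈ M.verts := hM.2 _
      obtain ⟨w, hw, -⟩ := hM.1 hv
      have hadj : (torusGraph n 3).Adj (i, r) w.val := M.adj_sub hw
      obtain ⟨hne, hcase⟩ := hadj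
      rcases hcase with ⟨h1, -⟩ | ⟨h2, h3⟩
      · exfalso
        replace h1 : i = (w.val).1 := h1
        have : (w.val).2 ∈ S i := by rw [memS, h1]; exact w.2
        rw [hB, Finset.mem_singleton] at this
        apply hne
        apply Prod.ext h1 this.symm
      · replace h2 : r = (w.val).2 := h2
        rw [Finset.mem_union]
        rcases h3 with h3 | h3
        · left
          replace h3 : i = (w.val).1 + 1 := h3
          have hu1 : (w.val).1 = i - 1 := by rw [h3]; ring
          rw [memS, ← hu1, h2]
          exact w.2
        · right
          replace h3 : (w.val).1 = i + 1 := h3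
          rw [memS, ← h3, h2]
          exact w.2
  have hsum : D.ncard = ∑ i : ZMod n, (S i).card := by
    haveI : Fintype ↥D := Fintype.ofFinite _
    rw [Set.ncard_eq_toFinset_card' D]
    rw [Finset.card_eq_sum_card_fiberwise (f := Prod.fst) (t := Finset.univ)
      (fun x _ => Finset.mem_univ _)]
    apply Finset.sum_congr rfl
    intro i _
    apply Finset.card_bij (fun p _ => p.2)
    · intro p hp
      simp only [Finset.mem_filter, Set.mem_toFinset] at hp
      rw [memS, ← hp.2]
      exact hp.1
    · intro p hp p' hp'
      simp only [Finset.mem_filter, Set.mem_toFinset] at hp hp'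
      intro h
      exact Prod.ext (hp.2.trans hp'.2.symm) h
    · intro j hj
      rw [memS] at hj
      exact ⟨(i, j), by simp [hj], rfl⟩
  constructor
  · rw [hsum]
    exact abstract_lower n S hcol
  · obtain ⟨M, hM⟩ := hD.2
    haveI : Fintype ↥D := Fintype.ofFinite _
    have he := hM.even_card
    rw [Set.ncard_eq_toFinset_card' D, Set.toFinset_card]
    exact he

def basePat : ℕ → Finset (ZMod 3)
  | 0 => {0, 1}
  | 2 => {2}
  | 3 => {2}
  | _ => ∅

def tailLen : ℕ → ℕ
  | 0 => 0
  | 1 => 1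
  | 2 => 7
  | 3 => 3
  | _ => 4

def tailPat : ℕ → ℕ → Finset (ZMod 3)
  | 1, 0 => {0, 1}
  | 2, 0 => {0, 1}
  | 2, 2 => {2}
  | 2, 3 => {2}
  | 2, 4 => {2}
  | 2, 5 => {2}
  | 3, 0 => {0, 1}
  | 3, 1 => {2}
  | 3, 2 => {2}
  | 4, 0 => {0, 1}
  | 4, 2 => {2}
  | 4, 3 => {2}
  | _, _ => ∅

def tailF : ℕ → ℕ → Bool
  | 2, 2 => true
  | 2, 4 => true
  | 3, 1 => true
  | 4, 2 => true
  | _, _ => false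

def conS (n a : ℕ) : Finset (ZMod 3) :=
  if a < n - tailLen (n % 5) then basePat (a % 5)
  else tailPat (n % 5) (a - (n - tailLen (n % 5)))

def conF (n a : ℕ) : Bool :=
  if a < n - tailLen (n % 5) then decide (a % 5 = 2)
  else tailF (n % 5) (a - (n - tailLen (n % 5)))

def nxt (n a : ℕ) : ℕ := if a + 1 = n then 0 else a + 1
def prv (n a : ℕ) : ℕ := if a = 0 then n - 1 else a - 1

theorem conS_base (n a : ℕ) (h : a < n - tailLen (n % 5)) : conS n a = basePat (a % 5) := by
  unfold conS; rw [if_pos h]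

theorem conS_tail (n a : ℕ) (h : ¬ a < n - tailLen (n % 5)) :
    conS n a = tailPat (n % 5) (a - (n - tailLen (n % 5))) := by
  unfold conS; rw [if_neg h]

theorem conF_base (n a : ℕ) (h : a < n - tailLen (n % 5)) : conF n a = decide (a % 5 = 2) := by
  unfold conF; rw [if_pos h]

theorem conF_tail (n a : ℕ) (h : ¬ a < n - tailLen (n % 5)) :
    conF n a = tailF (n % 5) (a - (n - tailLen (n % 5))) := by
  unfold conF; rw [if_neg h]

theorem conCL (n a : ℕ) (hn3 : 3 ≤ n) (ha : a < n) :
    conS n a = {0, 1} ∨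
    (conS n a = ∅ ∧ ∀ j : ZMod 3, j ∈ conS n (prv n a) ∪ conS n (nxt n a)) ∨
    (conS n a = {2} ∧ conF n a = true ∧ conS n (nxt n a) = {2} ∧ conF n (nxt n a) = false) ∨
    (conS n a = {2} ∧ conF n a = false ∧ conS n (prv n a) = {2} ∧ conF n (prv n a) = true) := by
  have hr : n % 5 = 0 ∨ n % 5 = 1 ∨ n % 5 = 2 ∨ n % 5 = 3 ∨ n % 5 = 4 := by omega
  rcases hr with hr | hr | hr | hr | hr

  · have hL : tailLen (n % 5) = 0 := by rw [hr]; rfl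
    have hSa : conS n a = basePat (a % 5) := conS_base n a (by omega)
    have hFa : conF n a = decide (a % 5 = 2) := conF_base n a (by omega)
    have hb : a % 5 = 0 ∨ a % 5 = 1 ∨ a % 5 = 2 ∨ a % 5 = 3 ∨ a % 5 = 4 := by omega
    rcases hb with hb | hb | hb | hb | hb
    · left; rw [hSa, hb]; rfl
    · right; left
      refine ⟨by rw [hSa, hb]; rfl, ?_⟩
      have hprv : prv n a = a - 1 := by unfold prv; rw [if_neg (by omega)]
      have hnxt : nxt n a = a + 1 := by unfold nxt; rw [if_neg (by omega)]
      rw [hprv, hnxt, conS_base n _ (by omega), conS_base n _ (by omega),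
        show (a - 1) % 5 = 0 from by omega, show (a + 1) % 5 = 2 from by omega]
      decide
    · right; right; left
      have hnxt : nxt n a = a + 1 := by unfold nxt; rw [if_neg (by omega)]
      refine ⟨by rw [hSa, hb]; rfl, by rw [hFa, hb]; rfl, ?_, ?_⟩
      · rw [hnxt, conS_base n _ (by omega), show (a + 1) % 5 = 3 from by omega]; rfl
      · rw [hnxt, conF_base n _ (by omega), show (a + 1) % 5 = 3 from by omega]; rfl
    · right; right; right
      have hprv : prv n a = a - 1 := by unfold prv; rw [if_neg (by omega)]
      refine ⟨by rw [hSa, hb]; rfl, by rw [hFa, hb]; rfl, ?_, ?_⟩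
      · rw [hprv, conS_base n _ (by omega), show (a - 1) % 5 = 2 from by omega]; rfl
      · rw [hprv, conF_base n _ (by omega), show (a - 1) % 5 = 2 from by omega]; rfl
    · right; left
      refine ⟨by rw [hSa, hb]; rfl, ?_⟩
      have hprv : prv n a = a - 1 := by unfold prv; rw [if_neg (by omega)]
      have h1 : conS n (prv n a) = basePat ((a - 1) % 5) := by
        rw [hprv]; exact conS_base n _ (by omega)
      have h2 : conS n (nxt n a) = ({0, 1} : Finset (ZMod 3)) := by
        rcases (show a + 1 < n - tailLen (n % 5) ∨ a + 1 = n from by omega) with h4 | h4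
        · have hnx : nxt n a = a + 1 := by unfold nxt; rw [if_neg (by omega)]
          rw [hnx, conS_base n _ (by omega), show (a + 1) % 5 = 0 from by omega]; rfl
        · have hnx : nxt n a = 0 := by unfold nxt; rw [if_pos h4]
          rw [hnx, conS_base n 0 (by omega)]; rfl
      rw [h1, h2, show (a - 1) % 5 = 3 from by omega]
      decide
  · have hL : tailLen (n % 5) = 1 := by rw [hr]; rfl
    rcases (show a < n - tailLen (n % 5) ∨ n - tailLen (n % 5) ≤ a from by omega) with ham | ham
    · have hSa : conS n a = basePat (a % 5) := conS_base n a (by omega)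
      have hFa : conF n a = decide (a % 5 = 2) := conF_base n a (by omega)
      have hb : a % 5 = 0 ∨ a % 5 = 1 ∨ a % 5 = 2 ∨ a % 5 = 3 ∨ a % 5 = 4 := by omega
      rcases hb with hb | hb | hb | hb | hb
      · left; rw [hSa, hb]; rfl
      · right; left
        refine ⟨by rw [hSa, hb]; rfl, ?_⟩
        have hprv : prv n a = a - 1 := by unfold prv; rw [if_neg (by omega)]
        have hnxt : nxt n a = a + 1 := by unfold nxt; rw [if_neg (by omega)]
        rw [hprv, hnxt, conS_base n _ (by omega), conS_base n _ (by omega),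
          show (a - 1) % 5 = 0 from by omega, show (a + 1) % 5 = 2 from by omega]
        decide
      · right; right; left
        have hnxt : nxt n a = a + 1 := by unfold nxt; rw [if_neg (by omega)]
        refine ⟨by rw [hSa, hb]; rfl, by rw [hFa, hb]; rfl, ?_, ?_⟩
        · rw [hnxt, conS_base n _ (by omega), show (a + 1) % 5 = 3 from by omega]; rfl
        · rw [hnxt, conF_base n _ (by omega), show (a + 1) % 5 = 3 from by omega]; rfl
      · right; right; right
        have hprv : prv n a = a - 1 := by unfold prv; rw [if_neg (by omega)]
        refine ⟨by rw [hSa, hb]; rfl, by rw [hFa, hb]; rfl, ?_, ?_⟩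
        · rw [hprv, conS_base n _ (by omega), show (a - 1) % 5 = 2 from by omega]; rfl
        · rw [hprv, conF_base n _ (by omega), show (a - 1) % 5 = 2 from by omega]; rfl
      · right; left
        refine ⟨by rw [hSa, hb]; rfl, ?_⟩
        have hprv : prv n a = a - 1 := by unfold prv; rw [if_neg (by omega)]
        have h1 : conS n (prv n a) = basePat ((a - 1) % 5) := by
          rw [hprv]; exact conS_base n _ (by omega)
        have h2 : conS n (nxt n a) = ({0, 1} : Finset (ZMod 3)) := by
          rcases (show a + 1 < n - tailLen (n % 5) ∨ a + 1 = n - tailLen (n % 5) from by omega) with h4 | h4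
          · have hnx : nxt n a = a + 1 := by unfold nxt; rw [if_neg (by omega)]
            rw [hnx, conS_base n _ (by omega), show (a + 1) % 5 = 0 from by omega]; rfl
          · have hnx : nxt n a = a + 1 := by unfold nxt; rw [if_neg (by omega)]
            rw [hnx, conS_tail n _ (by omega),
              show a + 1 - (n - tailLen (n % 5)) = 0 from by omega, hr]; rfl
        rw [h1, h2, show (a - 1) % 5 = 3 from by omega]
        decide
    · left
      rw [conS_tail n a (by omega), show a - (n - tailLen (n % 5)) = 0 from by omega, hr]; rfl
  · have hL : tailLen (n % 5) = 7 := by rw [hr]; rfl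
    rcases (show a < n - tailLen (n % 5) ∨ n - tailLen (n % 5) ≤ a from by omega) with ham | ham
    · have hSa : conS n a = basePat (a % 5) := conS_base n a (by omega)
      have hFa : conF n a = decide (a % 5 = 2) := conF_base n a (by omega)
      have hb : a % 5 = 0 ∨ a % 5 = 1 ∨ a % 5 = 2 ∨ a % 5 = 3 ∨ a % 5 = 4 := by omega
      rcases hb with hb | hb | hb | hb | hb
      · left; rw [hSa, hb]; rfl
      · right; left
        refine ⟨by rw [hSa, hb]; rfl, ?_⟩
        have hprv : prv n a = a - 1 := by unfold prv; rw [if_neg (by omega)]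
        have hnxt : nxt n a = a + 1 := by unfold nxt; rw [if_neg (by omega)]
        rw [hprv, hnxt, conS_base n _ (by omega), conS_base n _ (by omega),
          show (a - 1) % 5 = 0 from by omega, show (a + 1) % 5 = 2 from by omega]
        decide
      · right; right; left
        have hnxt : nxt n a = a + 1 := by unfold nxt; rw [if_neg (by omega)]
        refine ⟨by rw [hSa, hb]; rfl, by rw [hFa, hb]; rfl, ?_, ?_⟩
        · rw [hnxt, conS_base n _ (by omega), show (a + 1) % 5 = 3 from by omega]; rfl
        · rw [hnxt, conF_base n _ (by omega), show (a + 1) % 5 = 3 from by omega]; rfl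
      · right; right; right
        have hprv : prv n a = a - 1 := by unfold prv; rw [if_neg (by omega)]
        refine ⟨by rw [hSa, hb]; rfl, by rw [hFa, hb]; rfl, ?_, ?_⟩
        · rw [hprv, conS_base n _ (by omega), show (a - 1) % 5 = 2 from by omega]; rfl
        · rw [hprv, conF_base n _ (by omega), show (a - 1) % 5 = 2 from by omega]; rfl
      · right; left
        refine ⟨by rw [hSa, hb]; rfl, ?_⟩
        have hprv : prv n a = a - 1 := by unfold prv; rw [if_neg (by omega)]
        have h1 : conS n (prv n a) = basePat ((a - 1) % 5) := by
          rw [hprv]; exact conS_base n _ (by omega)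
        have h2 : conS n (nxt n a) = ({0, 1} : Finset (ZMod 3)) := by
          rcases (show a + 1 < n - tailLen (n % 5) ∨ a + 1 = n - tailLen (n % 5) from by omega) with h4 | h4
          · have hnx : nxt n a = a + 1 := by unfold nxt; rw [if_neg (by omega)]
            rw [hnx, conS_base n _ (by omega), show (a + 1) % 5 = 0 from by omega]; rfl
          · have hnx : nxt n a = a + 1 := by unfold nxt; rw [if_neg (by omega)]
            rw [hnx, conS_tail n _ (by omega),
              show a + 1 - (n - tailLen (n % 5)) = 0 from by omega, hr]; rfl
        rw [h1, h2, show (a - 1) % 5 = 3 from by omega]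
        decide
    · have hoff : a - (n - tailLen (n % 5)) = 0 ∨ a - (n - tailLen (n % 5)) = 1 ∨ a - (n - tailLen (n % 5)) = 2 ∨ a - (n - tailLen (n % 5)) = 3 ∨ a - (n - tailLen (n % 5)) = 4 ∨ a - (n - tailLen (n % 5)) = 5 ∨ a - (n - tailLen (n % 5)) = 6 := by omega
      rcases hoff with ht0 | ht1 | ht2 | ht3 | ht4 | ht5 | ht6
      · left
        rw [conS_tail n a (by omega), show a - (n - tailLen (n % 5)) = 0 from by omega, hr]; rfl
      · right; left
        refine ⟨by rw [conS_tail n a (by omega), show a - (n - tailLen (n % 5)) = 1 from by omega, hr]; rfl, ?_⟩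
        have hprv : prv n a = a - 1 := by unfold prv; rw [if_neg (by omega)]
        have h1 : conS n (prv n a) = tailPat (n % 5) 0 := by
          rw [hprv, conS_tail n _ (by omega), show a - 1 - (n - tailLen (n % 5)) = 0 from by omega]
        have h2 : conS n (nxt n a) = tailPat (n % 5) 2 := by
          have hnxt : nxt n a = a + 1 := by unfold nxt; rw [if_neg (by omega)]
          rw [hnxt, conS_tail n _ (by omega), show a + 1 - (n - tailLen (n % 5)) = 2 from by omega]
        rw [h1, h2, hr]
        decide
      · right; right; left
        have hnxt : nxt n a = a + 1 := by unfold nxt; rw [if_neg (by omega)]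
        refine ⟨?_, ?_, ?_, ?_⟩
        · rw [conS_tail n a (by omega), show a - (n - tailLen (n % 5)) = 2 from by omega, hr]; rfl
        · rw [conF_tail n a (by omega), show a - (n - tailLen (n % 5)) = 2 from by omega, hr]; rfl
        · rw [hnxt, conS_tail n _ (by omega), show a + 1 - (n - tailLen (n % 5)) = 3 from by omega, hr]; rfl
        · rw [hnxt, conF_tail n _ (by omega), show a + 1 - (n - tailLen (n % 5)) = 3 from by omega, hr]; rfl
      · right; right; right
        have hprv : prv n a = a - 1 := by unfold prv; rw [if_neg (by omega)]
        refine ⟨?_, ?_, ?_, ?_⟩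
        · rw [conS_tail n a (by omega), show a - (n - tailLen (n % 5)) = 3 from by omega, hr]; rfl
        · rw [conF_tail n a (by omega), show a - (n - tailLen (n % 5)) = 3 from by omega, hr]; rfl
        · rw [hprv, conS_tail n _ (by omega), show a - 1 - (n - tailLen (n % 5)) = 2 from by omega, hr]; rfl
        · rw [hprv, conF_tail n _ (by omega), show a - 1 - (n - tailLen (n % 5)) = 2 from by omega, hr]; rfl
      · right; right; left
        have hnxt : nxt n a = a + 1 := by unfold nxt; rw [if_neg (by omega)]
        refine ⟨?_, ?_, ?_, ?_⟩
        · rw [conS_tail n a (by omega), show a - (n - tailLen (n % 5)) = 4 from by omega, hr]; rfl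
        · rw [conF_tail n a (by omega), show a - (n - tailLen (n % 5)) = 4 from by omega, hr]; rfl
        · rw [hnxt, conS_tail n _ (by omega), show a + 1 - (n - tailLen (n % 5)) = 5 from by omega, hr]; rfl
        · rw [hnxt, conF_tail n _ (by omega), show a + 1 - (n - tailLen (n % 5)) = 5 from by omega, hr]; rfl
      · right; right; right
        have hprv : prv n a = a - 1 := by unfold prv; rw [if_neg (by omega)]
        refine ⟨?_, ?_, ?_, ?_⟩
        · rw [conS_tail n a (by omega), show a - (n - tailLen (n % 5)) = 5 from by omega, hr]; rfl
        · rw [conF_tail n a (by omega), show a - (n - tailLen (n % 5)) = 5 from by omega, hr]; rfl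
        · rw [hprv, conS_tail n _ (by omega), show a - 1 - (n - tailLen (n % 5)) = 4 from by omega, hr]; rfl
        · rw [hprv, conF_tail n _ (by omega), show a - 1 - (n - tailLen (n % 5)) = 4 from by omega, hr]; rfl
      · right; left
        refine ⟨by rw [conS_tail n a (by omega), show a - (n - tailLen (n % 5)) = 6 from by omega, hr]; rfl, ?_⟩
        have hprv : prv n a = a - 1 := by unfold prv; rw [if_neg (by omega)]
        have h1 : conS n (prv n a) = tailPat (n % 5) 5 := by
          rw [hprv, conS_tail n _ (by omega), show a - 1 - (n - tailLen (n % 5)) = 5 from by omega]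
        have hnx : nxt n a = 0 := by unfold nxt; rw [if_pos (by omega)]
        have h2 : conS n (nxt n a) = ({0, 1} : Finset (ZMod 3)) := by
            rcases (show 0 < n - tailLen (n % 5) ∨ n - tailLen (n % 5) = 0 from by omega) with h0 | h0
            · rw [hnx, conS_base n 0 h0]; rfl
            · rw [hnx, conS_tail n 0 (by omega), show 0 - (n - tailLen (n % 5)) = 0 from by omega, hr]; rfl
        rw [h1, h2, hr]
        decide
  · have hL : tailLen (n % 5) = 3 := by rw [hr]; rfl
    rcases (show a < n - tailLen (n % 5) ∨ n - tailLen (n % 5) ≤ a from by omega) with ham | ham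
    · have hSa : conS n a = basePat (a % 5) := conS_base n a (by omega)
      have hFa : conF n a = decide (a % 5 = 2) := conF_base n a (by omega)
      have hb : a % 5 = 0 ∨ a % 5 = 1 ∨ a % 5 = 2 ∨ a % 5 = 3 ∨ a % 5 = 4 := by omega
      rcases hb with hb | hb | hb | hb | hb
      · left; rw [hSa, hb]; rfl
      · right; left
        refine ⟨by rw [hSa, hb]; rfl, ?_⟩
        have hprv : prv n a = a - 1 := by unfold prv; rw [if_neg (by omega)]
        have hnxt : nxt n a = a + 1 := by unfold nxt; rw [if_neg (by omega)]
        rw [hprv, hnxt, conS_base n _ (by omega), conS_base n _ (by omega),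
          show (a - 1) % 5 = 0 from by omega, show (a + 1) % 5 = 2 from by omega]
        decide
      · right; right; left
        have hnxt : nxt n a = a + 1 := by unfold nxt; rw [if_neg (by omega)]
        refine ⟨by rw [hSa, hb]; rfl, by rw [hFa, hb]; rfl, ?_, ?_⟩
        · rw [hnxt, conS_base n _ (by omega), show (a + 1) % 5 = 3 from by omega]; rfl
        · rw [hnxt, conF_base n _ (by omega), show (a + 1) % 5 = 3 from by omega]; rfl
      · right; right; right
        have hprv : prv n a = a - 1 := by unfold prv; rw [if_neg (by omega)]
        refine ⟨by rw [hSa, hb]; rfl, by rw [hFa, hb]; rfl, ?_, ?_⟩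
        · rw [hprv, conS_base n _ (by omega), show (a - 1) % 5 = 2 from by omega]; rfl
        · rw [hprv, conF_base n _ (by omega), show (a - 1) % 5 = 2 from by omega]; rfl
      · right; left
        refine ⟨by rw [hSa, hb]; rfl, ?_⟩
        have hprv : prv n a = a - 1 := by unfold prv; rw [if_neg (by omega)]
        have h1 : conS n (prv n a) = basePat ((a - 1) % 5) := by
          rw [hprv]; exact conS_base n _ (by omega)
        have h2 : conS n (nxt n a) = ({0, 1} : Finset (ZMod 3)) := by
          rcases (show a + 1 < n - tailLen (n % 5) ∨ a + 1 = n - tailLen (n % 5) from by omega) with h4 | h4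
          · have hnx : nxt n a = a + 1 := by unfold nxt; rw [if_neg (by omega)]
            rw [hnx, conS_base n _ (by omega), show (a + 1) % 5 = 0 from by omega]; rfl
          · have hnx : nxt n a = a + 1 := by unfold nxt; rw [if_neg (by omega)]
            rw [hnx, conS_tail n _ (by omega),
              show a + 1 - (n - tailLen (n % 5)) = 0 from by omega, hr]; rfl
        rw [h1, h2, show (a - 1) % 5 = 3 from by omega]
        decide
    · have hoff : a - (n - tailLen (n % 5)) = 0 ∨ a - (n - tailLen (n % 5)) = 1 ∨ a - (n - tailLen (n % 5)) = 2 := by omega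
      rcases hoff with ht0 | ht1 | ht2
      · left
        rw [conS_tail n a (by omega), show a - (n - tailLen (n % 5)) = 0 from by omega, hr]; rfl
      · right; right; left
        have hnxt : nxt n a = a + 1 := by unfold nxt; rw [if_neg (by omega)]
        refine ⟨?_, ?_, ?_, ?_⟩
        · rw [conS_tail n a (by omega), show a - (n - tailLen (n % 5)) = 1 from by omega, hr]; rfl
        · rw [conF_tail n a (by omega), show a - (n - tailLen (n % 5)) = 1 from by omega, hr]; rfl
        · rw [hnxt, conS_tail n _ (by omega), show a + 1 - (n - tailLen (n % 5)) = 2 from by omega, hr]; rfl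
        · rw [hnxt, conF_tail n _ (by omega), show a + 1 - (n - tailLen (n % 5)) = 2 from by omega, hr]; rfl
      · right; right; right
        have hprv : prv n a = a - 1 := by unfold prv; rw [if_neg (by omega)]
        refine ⟨?_, ?_, ?_, ?_⟩
        · rw [conS_tail n a (by omega), show a - (n - tailLen (n % 5)) = 2 from by omega, hr]; rfl
        · rw [conF_tail n a (by omega), show a - (n - tailLen (n % 5)) = 2 from by omega, hr]; rfl
        · rw [hprv, conS_tail n _ (by omega), show a - 1 - (n - tailLen (n % 5)) = 1 from by omega, hr]; rfl
        · rw [hprv, conF_tail n _ (by omega), show a - 1 - (n - tailLen (n % 5)) = 1 from by omega, hr]; rfl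
  · have hL : tailLen (n % 5) = 4 := by rw [hr]; rfl
    rcases (show a < n - tailLen (n % 5) ∨ n - tailLen (n % 5) ≤ a from by omega) with ham | ham
    · have hSa : conS n a = basePat (a % 5) := conS_base n a (by omega)
      have hFa : conF n a = decide (a % 5 = 2) := conF_base n a (by omega)
      have hb : a % 5 = 0 ∨ a % 5 = 1 ∨ a % 5 = 2 ∨ a % 5 = 3 ∨ a % 5 = 4 := by omega
      rcases hb with hb | hb | hb | hb | hb
      · left; rw [hSa, hb]; rfl
      · right; left
        refine ⟨by rw [hSa, hb]; rfl, ?_⟩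
        have hprv : prv n a = a - 1 := by unfold prv; rw [if_neg (by omega)]
        have hnxt : nxt n a = a + 1 := by unfold nxt; rw [if_neg (by omega)]
        rw [hprv, hnxt, conS_base n _ (by omega), conS_base n _ (by omega),
          show (a - 1) % 5 = 0 from by omega, show (a + 1) % 5 = 2 from by omega]
        decide
      · right; right; left
        have hnxt : nxt n a = a + 1 := by unfold nxt; rw [if_neg (by omega)]
        refine ⟨by rw [hSa, hb]; rfl, by rw [hFa, hb]; rfl, ?_, ?_⟩
        · rw [hnxt, conS_base n _ (by omega), show (a + 1) % 5 = 3 from by omega]; rfl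
        · rw [hnxt, conF_base n _ (by omega), show (a + 1) % 5 = 3 from by omega]; rfl
      · right; right; right
        have hprv : prv n a = a - 1 := by unfold prv; rw [if_neg (by omega)]
        refine ⟨by rw [hSa, hb]; rfl, by rw [hFa, hb]; rfl, ?_, ?_⟩
        · rw [hprv, conS_base n _ (by omega), show (a - 1) % 5 = 2 from by omega]; rfl
        · rw [hprv, conF_base n _ (by omega), show (a - 1) % 5 = 2 from by omega]; rfl
      · right; left
        refine ⟨by rw [hSa, hb]; rfl, ?_⟩
        have hprv : prv n a = a - 1 := by unfold prv; rw [if_neg (by omega)]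
        have h1 : conS n (prv n a) = basePat ((a - 1) % 5) := by
          rw [hprv]; exact conS_base n _ (by omega)
        have h2 : conS n (nxt n a) = ({0, 1} : Finset (ZMod 3)) := by
          rcases (show a + 1 < n - tailLen (n % 5) ∨ a + 1 = n - tailLen (n % 5) from by omega) with h4 | h4
          · have hnx : nxt n a = a + 1 := by unfold nxt; rw [if_neg (by omega)]
            rw [hnx, conS_base n _ (by omega), show (a + 1) % 5 = 0 from by omega]; rfl
          · have hnx : nxt n a = a + 1 := by unfold nxt; rw [if_neg (by omega)]
            rw [hnx, conS_tail n _ (by omega),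
              show a + 1 - (n - tailLen (n % 5)) = 0 from by omega, hr]; rfl
        rw [h1, h2, show (a - 1) % 5 = 3 from by omega]
        decide
    · have hoff : a - (n - tailLen (n % 5)) = 0 ∨ a - (n - tailLen (n % 5)) = 1 ∨ a - (n - tailLen (n % 5)) = 2 ∨ a - (n - tailLen (n % 5)) = 3 := by omega
      rcases hoff with ht0 | ht1 | ht2 | ht3
      · left
        rw [conS_tail n a (by omega), show a - (n - tailLen (n % 5)) = 0 from by omega, hr]; rfl
      · right; left
        refine ⟨by rw [conS_tail n a (by omega), show a - (n - tailLen (n % 5)) = 1 from by omega, hr]; rfl, ?_⟩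
        have hprv : prv n a = a - 1 := by unfold prv; rw [if_neg (by omega)]
        have h1 : conS n (prv n a) = tailPat (n % 5) 0 := by
          rw [hprv, conS_tail n _ (by omega), show a - 1 - (n - tailLen (n % 5)) = 0 from by omega]
        have h2 : conS n (nxt n a) = tailPat (n % 5) 2 := by
          have hnxt : nxt n a = a + 1 := by unfold nxt; rw [if_neg (by omega)]
          rw [hnxt, conS_tail n _ (by omega), show a + 1 - (n - tailLen (n % 5)) = 2 from by omega]
        rw [h1, h2, hr]
        decide
      · right; right; left
        have hnxt : nxt n a = a + 1 := by unfold nxt; rw [if_neg (by omega)]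
        refine ⟨?_, ?_, ?_, ?_⟩
        · rw [conS_tail n a (by omega), show a - (n - tailLen (n % 5)) = 2 from by omega, hr]; rfl
        · rw [conF_tail n a (by omega), show a - (n - tailLen (n % 5)) = 2 from by omega, hr]; rfl
        · rw [hnxt, conS_tail n _ (by omega), show a + 1 - (n - tailLen (n % 5)) = 3 from by omega, hr]; rfl
        · rw [hnxt, conF_tail n _ (by omega), show a + 1 - (n - tailLen (n % 5)) = 3 from by omega, hr]; rfl
      · right; right; right
        have hprv : prv n a = a - 1 := by unfold prv; rw [if_neg (by omega)]
        refine ⟨?_, ?_, ?_, ?_⟩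
        · rw [conS_tail n a (by omega), show a - (n - tailLen (n % 5)) = 3 from by omega, hr]; rfl
        · rw [conF_tail n a (by omega), show a - (n - tailLen (n % 5)) = 3 from by omega, hr]; rfl
        · rw [hprv, conS_tail n _ (by omega), show a - 1 - (n - tailLen (n % 5)) = 2 from by omega, hr]; rfl
        · rw [hprv, conF_tail n _ (by omega), show a - 1 - (n - tailLen (n % 5)) = 2 from by omega, hr]; rfl


theorem val_add_one (n : ℕ) (hn : 2 ≤ n) (i : ZMod n) : (i + 1).val = nxt n i.val := by
  haveI : NeZero n := ⟨by omega⟩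
  have hvl : i.val < n := ZMod.val_lt i
  have h1 : (i + 1).val = (i.val + (1 : ZMod n).val) % n := ZMod.val_add i 1
  have h2 : (1 : ZMod n).val = 1 := by
    rw [ZMod.val_one_eq_one_mod, Nat.mod_eq_of_lt (by omega)]
  rw [h1, h2]
  unfold nxt
  rcases eq_or_ne (i.val + 1) n with h | h
  · rw [if_pos h, h, Nat.mod_self]
  · rw [if_neg h, Nat.mod_eq_of_lt (by omega)]

theorem prv_nxt (n a : ℕ) (ha : a < n) : prv n (nxt n a) = a := by
  unfold nxt prv
  rcases eq_or_ne (a + 1) n with h | h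
  · rw [if_pos h, if_pos rfl]; omega
  · rw [if_neg h, if_neg (by omega)]; omega

theorem val_sub_one (n : ℕ) (hn : 2 ≤ n) (i : ZMod n) : (i - 1).val = prv n i.val := by
  have h := val_add_one n hn (i - 1)
  rw [sub_add_cancel] at h
  haveI : NeZero n := ⟨by omega⟩
  rw [h, prv_nxt n _ (ZMod.val_lt _)]
theorem construct_paired (n : ℕ) (hn : 3 ≤ n) (S : ZMod n → Finset (ZMod 3))
    (μ : ZMod n × ZMod 3 → ZMod n × ZMod 3)
    (hdom : ∀ i : ZMod n, S i = ∅ → ∀ j : ZMod 3, j ∈ S (i - 1) ∪ S (i + 1))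
    (hμ : ∀ p : ZMod n × ZMod 3, p.2 ∈ S p.1 →
      (μ p).2 ∈ S (μ p).1 ∧ (torusGraph n 3).Adj p (μ p) ∧ μ (μ p) = p) :
    IsPairedDomSet (torusGraph n 3) {p : ZMod n × ZMod 3 | p.2 ∈ S p.1} := by
  haveI : NeZero n := ⟨by omega⟩
  haveI : Fact (1 < n) := ⟨by omega⟩
  have hone : (1 : ZMod n) ≠ 0 := one_ne_zero
  have hz3 : ∀ j j' : ZMod 3, j ≠ j' → (j = j' + 1 ∨ j' = j + 1) := by decide
  constructor
  · intro v hv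
    simp only [Set.mem_setOf_eq] at hv
    by_cases hS : S v.1 = ∅
    · have hj := hdom v.1 hS v.2
      rw [Finset.mem_union] at hj
      rcases hj with hj | hj
      · refine ⟨(v.1 - 1, v.2), hj, ?_, Or.inr ⟨rfl, Or.inl (by ring)⟩⟩
        intro hEq
        have h1 : v.1 = v.1 - 1 := congrArg Prod.fst hEq
        exact hone (sub_eq_self.mp h1.symm)
      · refine ⟨(v.1 + 1, v.2), hj, ?_, Or.inr ⟨rfl, Or.inr rfl⟩⟩
        intro hEq
        have h1 : v.1 = v.1 + 1 := congrArg Prod.fst hEq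
        exact hone (left_eq_add.mp h1)
    · obtain ⟨j', hj'⟩ := Finset.nonempty_iff_ne_empty.mpr hS
      have hne : v.2 ≠ j' := by
        intro h; apply hv; rw [h]; exact hj'
      refine ⟨(v.1, j'), hj', ?_, Or.inl ⟨rfl, hz3 v.2 j' hne⟩⟩
      intro hEq
      exact hne (congrArg Prod.snd hEq)
  · set D := {p : ZMod n × ZMod 3 | p.2 ∈ S p.1} with hD
    have hmem : ∀ p : ↥D, (μ p.val).2 ∈ S (μ p.val).1 := fun p => (hμ p.val p.2).1
    let pair : ↥D → ↥D := fun p => ⟨μ p.val, hmem p⟩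
    have hinv : ∀ p, pair (pair p) = p := fun p => Subtype.ext ((hμ p.val p.2).2.2)
    refine ⟨{ verts := Set.univ,
              Adj := fun a b => pair a = b,
              adj_sub := ?_,
              edge_vert := fun _ => Set.mem_univ _,
              symm := ?_ }, ?_, fun v => Set.mem_univ _⟩
    · intro a b h
      have := (hμ a.val a.2).2.1
      rw [← h]
      exact this
    · constructor
      intro a b h
      rw [← h, hinv]
    · intro v _
      exact ⟨pair v, rfl, fun y hy => Eq.symm hy⟩
def swap01 : ZMod 3 → ZMod 3 := fun j => if j = 0 then 1 else if j = 1 then 0 else j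

def muCon (n : ℕ) : ZMod n × ZMod 3 → ZMod n × ZMod 3
  | (i, j) =>
    if conS n i.val = {0, 1} then (i, swap01 j)
    else if conF n i.val then (i + 1, j) else (i - 1, j)

theorem con_paired (n : ℕ) (hn : 3 ≤ n) :
    IsPairedDomSet (torusGraph n 3) {p : ZMod n × ZMod 3 | p.2 ∈ conS n p.1.val} := by
  haveI : NeZero n := ⟨by omega⟩
  haveI : Fact (1 < n) := ⟨by omega⟩
  have hone : (1 : ZMod n) ≠ 0 := one_ne_zero
  apply construct_paired n hn (fun i => conS n i.val) (muCon n)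
  · intro i hS j
    rcases conCL n i.val hn (ZMod.val_lt i) with h | ⟨h, h2⟩ | ⟨h, _⟩ | ⟨h, _⟩
    · rw [hS] at h; exact absurd h (by decide)
    · have e1 : (i - 1).val = prv n i.val := val_sub_one n (by omega) i
      have e2 : (i + 1).val = nxt n i.val := val_add_one n (by omega) i
      simp only [e1, e2]
      exact h2 j
    · rw [hS] at h; exact absurd h (by decide)
    · rw [hS] at h; exact absurd h (by decide)
  · rintro ⟨i, j⟩ hp
    simp only at hp ⊢
    rcases conCL n i.val hn (ZMod.val_lt i) with h | ⟨h, _⟩ | ⟨h, hF, hnS, hnF⟩ | ⟨h, hF, hpS, hpF⟩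
    · have hμeq : muCon n (i, j) = (i, swap01 j) := by simp only [muCon]; rw [if_pos h]
      rw [hμeq]
      rw [h] at hp
      simp only [Finset.mem_insert, Finset.mem_singleton] at hp
      have hinv : muCon n (i, swap01 j) = (i, swap01 (swap01 j)) := by
        simp only [muCon]; rw [if_pos h]
      rcases hp with rfl | rfl
      · refine ⟨?_, ⟨?_, Or.inl ⟨rfl, ?_⟩⟩, ?_⟩
        · show swap01 0 ∈ conS n i.val
          rw [h]; decide
        · intro hEq
          exact absurd (congrArg Prod.snd hEq)
            (by show ¬((0 : ZMod 3) = swap01 0); decide)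
        · show (0 : ZMod 3) = swap01 0 + 1 ∨ swap01 0 = 0 + 1
          decide
        · rw [hinv]
          exact Prod.ext rfl (by show swap01 (swap01 0) = 0; decide)
      · refine ⟨?_, ⟨?_, Or.inl ⟨rfl, ?_⟩⟩, ?_⟩
        · show swap01 1 ∈ conS n i.val
          rw [h]; decide
        · intro hEq
          exact absurd (congrArg Prod.snd hEq)
            (by show ¬((1 : ZMod 3) = swap01 1); decide)
        · show (1 : ZMod 3) = swap01 1 + 1 ∨ swap01 1 = 1 + 1
          decide
        · rw [hinv]
          exact Prod.ext rfl (by show swap01 (swap01 1) = 1; decide)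
    · rw [h] at hp; exact absurd hp (Finset.notMem_empty j)
    · rw [h, Finset.mem_singleton] at hp
      subst hp
      have e2 : (i + 1).val = nxt n i.val := val_add_one n (by omega) i
      have hμeq : muCon n (i, (2 : ZMod 3)) = (i + 1, (2 : ZMod 3)) := by
        simp only [muCon]
        rw [if_neg (by rw [h]; decide), if_pos hF]
      rw [hμeq]
      refine ⟨?_, ⟨?_, Or.inr ⟨rfl, Or.inr rfl⟩⟩, ?_⟩
      · show (2 : ZMod 3) ∈ conS n (i + 1).val
        rw [e2, hnS]; decide
      · intro hEq
        have h1 : i = i + 1 := congrArg Prod.fst hEq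
        exact hone (left_eq_add.mp h1)
      · have hS' : conS n (i + 1).val = {2} := by rw [e2]; exact hnS
        have hF' : conF n (i + 1).val = false := by rw [e2]; exact hnF
        have heq2 : muCon n (i + 1, (2 : ZMod 3)) = (i + 1 - 1, (2 : ZMod 3)) := by
          simp only [muCon]
          rw [if_neg (by rw [hS']; decide), if_neg (by rw [hF']; decide)]
        rw [heq2]
        exact Prod.ext (add_sub_cancel_right i 1) rfl
    · rw [h, Finset.mem_singleton] at hp
      subst hp
      have e1 : (i - 1).val = prv n i.val := val_sub_one n (by omega) i
      have hμeq : muCon n (i, (2 : ZMod 3)) = (i - 1, (2 : ZMod 3)) := by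
        simp only [muCon]
        rw [if_neg (by rw [h]; decide), if_neg (by rw [hF]; decide)]
      rw [hμeq]
      refine ⟨?_, ⟨?_, Or.inr ⟨rfl, Or.inl (by ring)⟩⟩, ?_⟩
      · show (2 : ZMod 3) ∈ conS n (i - 1).val
        rw [e1, hpS]; decide
      · intro hEq
        have h1 : i = i - 1 := congrArg Prod.fst hEq
        exact hone (sub_eq_self.mp h1.symm)
      · have hS' : conS n (i - 1).val = {2} := by rw [e1]; exact hpS
        have hF' : conF n (i - 1).val = true := by rw [e1]; exact hpF
        have heq2 : muCon n (i - 1, (2 : ZMod 3)) = (i - 1 + 1, (2 : ZMod 3)) := by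
          simp only [muCon]
          rw [if_neg (by rw [hS']; decide), if_pos hF']
        rw [heq2]
        exact Prod.ext (sub_add_cancel i 1) rfl

theorem ncard_cols (n : ℕ) [NeZero n] (S : ZMod n → Finset (ZMod 3)) :
    {p : ZMod n × ZMod 3 | p.2 ∈ S p.1}.ncard = ∑ i : ZMod n, (S i).card := by
  classical
  set D := {p : ZMod n × ZMod 3 | p.2 ∈ S p.1} with hD
  haveI : Fintype ↥D := Fintype.ofFinite _
  rw [Set.ncard_eq_toFinset_card' D]
  rw [Finset.card_eq_sum_card_fiberwise (f := Prod.fst) (t := Finset.univ)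
    (fun x _ => Finset.mem_univ _)]
  apply Finset.sum_congr rfl
  intro i _
  apply Finset.card_bij (fun p _ => p.2)
  · intro p hp
    simp only [Finset.mem_filter, Set.mem_toFinset] at hp
    have := hp.1
    rw [hD, Set.mem_setOf_eq] at this
    rw [← hp.2]
    exact this
  · intro p hp p' hp'
    simp only [Finset.mem_filter, Set.mem_toFinset] at hp hp'
    intro h
    exact Prod.ext (hp.2.trans hp'.2.symm) h
  · intro j hj
    exact ⟨(i, j), Finset.mem_filter.mpr ⟨Set.mem_toFinset.mpr hj, rfl⟩, rfl⟩

theorem sum_zmod_eq (n : ℕ) [NeZero n] (f : ℕ → ℕ) :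
    ∑ i : ZMod n, f i.val = ∑ a ∈ Finset.range n, f a := by
  apply Finset.sum_bij' (fun (i : ZMod n) _ => i.val) (fun a _ => (a : ZMod n))
  · intro i _
    exact Finset.mem_range.mpr (ZMod.val_lt i)
  · intro a _
    exact Finset.mem_univ _
  · intro i _
    exact ZMod.natCast_rightInverse i
  · intro a ha
    exact ZMod.val_cast_of_lt (Finset.mem_range.mp ha)
  · intro i _
    rfl

theorem baseSum (k : ℕ) : ∑ a ∈ Finset.range (5 * k), (basePat (a % 5)).card = 4 * k := by
  induction k with
  | zero => simp
  | succ k ih =>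
    have h1 : 5 * (k + 1) = (5 * k + 4) + 1 := by omega
    rw [h1, Finset.sum_range_succ]
    have h2 : 5 * k + 4 = (5 * k + 3) + 1 := by omega
    rw [h2, Finset.sum_range_succ]
    have h3 : 5 * k + 3 = (5 * k + 2) + 1 := by omega
    rw [h3, Finset.sum_range_succ]
    have h4 : 5 * k + 2 = (5 * k + 1) + 1 := by omega
    rw [h4, Finset.sum_range_succ]
    have h5 : 5 * k + 1 = (5 * k) + 1 := by omega
    rw [h5, Finset.sum_range_succ, ih]
    rw [show (5 * k) % 5 = 0 from by omega, show (5 * k + 1) % 5 = 1 from by omega,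
      show (5 * k + 2) % 5 = 2 from by omega, show (5 * k + 3) % 5 = 3 from by omega,
      show (5 * k + 4) % 5 = 4 from by omega]
    have : (basePat 0).card = 2 ∧ (basePat 1).card = 0 ∧ (basePat 2).card = 1 ∧
        (basePat 3).card = 1 ∧ (basePat 4).card = 0 := by decide
    omega

theorem conSum (n : ℕ) (hn : 3 ≤ n) :
    ∑ a ∈ Finset.range n, (conS n a).card = 2 * ((2 * n + 4) / 5) := by
  have hr : n % 5 = 0 ∨ n % 5 = 1 ∨ n % 5 = 2 ∨ n % 5 = 3 ∨ n % 5 = 4 := by omega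
  have key : ∀ L, tailLen (n % 5) = L → L ≤ n →
      ∑ a ∈ Finset.range n, (conS n a).card
      = 4 * ((n - L) / 5) + ∑ t ∈ Finset.range L, (tailPat (n % 5) t).card := by
    intro L hL hLn
    have hsplit : ∑ a ∈ Finset.Ico 0 (n - L), (conS n a).card
        + ∑ a ∈ Finset.Ico (n - L) n, (conS n a).card
        = ∑ a ∈ Finset.Ico 0 n, (conS n a).card :=
      Finset.sum_Ico_consecutive _ (Nat.zero_le _) (by omega)
    rw [← Finset.range_eq_Ico, ← Finset.range_eq_Ico] at hsplit
    rw [← hsplit]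
    congr 1
    · have hbase : ∑ a ∈ Finset.range (n - L), (conS n a).card
          = ∑ a ∈ Finset.range (n - L), (basePat (a % 5)).card := by
        apply Finset.sum_congr rfl
        intro a ha
        rw [conS_base n a (by rw [hL]; exact Finset.mem_range.mp ha)]
      rw [hbase]
      have hm5 : (n - L) % 5 = 0 := by
        rcases hr with hr | hr | hr | hr | hr <;> rw [hr] at hL <;> simp [tailLen] at hL <;> omega
      rw [show n - L = 5 * ((n - L) / 5) from by omega]
      rw [baseSum]
      congr 1
      omega
    · rw [Finset.sum_Ico_eq_sum_range]
      rw [show n - (n - L) = L from by omega]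
      apply Finset.sum_congr rfl
      intro t ht
      rw [conS_tail n _ (by rw [hL]; omega)]
      rw [show n - L + t - (n - tailLen (n % 5)) = t from by rw [hL]; omega]
  rcases hr with hr | hr | hr | hr | hr
  · have h := key 0 (by rw [hr]; rfl) (by omega)
    rw [h]
    simp
    omega
  · have h := key 1 (by rw [hr]; rfl) (by omega)
    rw [h]
    rw [show ∑ t ∈ Finset.range 1, (tailPat (n % 5) t).card = 2 from by rw [hr]; decide]
    omega
  · have h := key 7 (by rw [hr]; rfl) (by omega)
    rw [h]
    rw [show ∑ t ∈ Finset.range 7, (tailPat (n % 5) t).card = 6 from by rw [hr]; decide]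
    omega
  · have h := key 3 (by rw [hr]; rfl) (by omega)
    rw [h]
    rw [show ∑ t ∈ Finset.range 3, (tailPat (n % 5) t).card = 4 from by rw [hr]; decide]
    omega
  · have h := key 4 (by rw [hr]; rfl) (by omega)
    rw [h]
    rw [show ∑ t ∈ Finset.range 4, (tailPat (n % 5) t).card = 4 from by rw [hr]; decide]
    omega

theorem stmt4 (n : ℕ) (hn : 3 ≤ n) :
    ((n % 5 = 0 ∨ n % 5 = 2 ∨ n % 5 = 4) →
      pairedDomNum (torusGraph n 3) = (4 * n + 4) / 5) ∧
    ((n % 5 = 1 ∨ n % 5 = 3) →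
      pairedDomNum (torusGraph n 3) = (4 * n + 4) / 5 + 1) := by
  haveI : NeZero n := ⟨by omega⟩
  have hncard : ({p : ZMod n × ZMod 3 | p.2 ∈ conS n p.1.val}).ncard = 2 * ((2 * n + 4) / 5) :=
    (ncard_cols n (fun i => conS n i.val)).trans
      ((sum_zmod_eq n (fun a => (conS n a).card)).trans (conSum n hn))
  have hmem : 2 * ((2 * n + 4) / 5) ∈
      {k | ∃ D : Set (ZMod n × ZMod 3), IsPairedDomSet (torusGraph n 3) D ∧ D.ncard = k} :=
    ⟨_, con_paired n hn, hncard⟩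
  have hlow : ∀ k ∈ {k | ∃ D : Set (ZMod n × ZMod 3),
      IsPairedDomSet (torusGraph n 3) D ∧ D.ncard = k}, 2 * ((2 * n + 4) / 5) ≤ k := by
    rintro k ⟨D, hD, rfl⟩
    obtain ⟨h1, h2⟩ := lower_core n hn D hD
    obtain ⟨c, hc⟩ := h2
    omega
  have hval : pairedDomNum (torusGraph n 3) = 2 * ((2 * n + 4) / 5) := by
    unfold pairedDomNum
    exact le_antisymm (Nat.sInf_le hmem) (le_csInf ⟨_, hmem⟩ hlow)
  constructor <;> intro hcase <;> rw [hval] <;> omega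
end

section
/- For n ≡ 1 or 3 (mod 4) with n ≥ 3, the total domination number and the paired domination number of C_n × C_4 both equal n + 1. -/
open SimpleGraph

namespace Stmt5Aux

instance torusAdjDec (n m : ℕ) : DecidableRel (torusGraph n m).Adj := fun a b =>
  inferInstanceAs (Decidable (a ≠ b ∧ ((a.1 = b.1 ∧ (a.2 = b.2 + 1 ∨ b.2 = a.2 + 1)) ∨
    (a.2 = b.2 ∧ (a.1 = b.1 + 1 ∨ b.1 = a.1 + 1)))))

lemma one_ne_zero' {n : ℕ} (hn : 3 ≤ n) : (1 : ZMod n) ≠ 0 := by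
  haveI : NeZero n := ⟨by omega⟩
  intro h1
  have h : n ∣ 1 := (ZMod.natCast_eq_zero_iff 1 n).mp (by exact_mod_cast h1)
  exact absurd (Nat.le_of_dvd (by norm_num) h) (by omega)

lemma two_ne_zero' {n : ℕ} (hn : 3 ≤ n) (hodd : n % 2 = 1) : (2 : ZMod n) ≠ 0 := by
  haveI : NeZero n := ⟨by omega⟩
  intro h2
  have h : n ∣ 2 := (ZMod.natCast_eq_zero_iff 2 n).mp (by exact_mod_cast h2)
  have := Nat.le_of_dvd (by norm_num) h
  omega

lemma cast_inj' {n : ℕ} (hn : 3 ≤ n) {a b : ℕ} (ha : a < n) (hb : b < n)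
    (h : (a : ZMod n) = b) : a = b := by
  haveI : NeZero n := ⟨by omega⟩
  have h1 := ZMod.val_cast_of_lt ha
  have h2 := ZMod.val_cast_of_lt hb
  rw [h] at h1; omega

lemma cast_val' {n : ℕ} (hn : 3 ≤ n) (x : ZMod n) : ((x.val : ℕ) : ZMod n) = x := by
  haveI : NeZero n := ⟨by omega⟩
  exact (ZMod.natCast_val x).trans (ZMod.cast_id n x)

lemma val_lt' {n : ℕ} (hn : 3 ≤ n) (x : ZMod n) : x.val < n := by
  haveI : NeZero n := ⟨by omega⟩
  exact ZMod.val_lt x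

/- #### The construction: vertical dominoes on even columns, alternating rows -/

/-- vertex `j` of the construction, `j ≤ n`; column `2*(j/2)`, row `2*((j/2)%2) + j%2`. -/
def fv (n j : ℕ) : ZMod n × ZMod 4 :=
  (((2 * (j / 2) : ℕ) : ZMod n), ((2 * ((j / 2) % 2) + j % 2 : ℕ) : ZMod 4))

def DD (n : ℕ) : Finset (ZMod n × ZMod 4) := (Finset.range (n + 1)).image (fv n)

lemma fv_inj {n : ℕ} (hn : 3 ≤ n) (hodd : n % 2 = 1) {j j' : ℕ}
    (hj : j ≤ n) (hj' : j' ≤ n) (h : fv n j = fv n j') : j = j' := by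
  unfold fv at h
  obtain ⟨h1, h2⟩ := Prod.mk.injEq .. ▸ h
  have e1 : 2 * (j / 2) = 2 * (j' / 2) :=
    cast_inj' hn (by omega) (by omega) h1
  have e2 : 2 * ((j / 2) % 2) + j % 2 = 2 * ((j' / 2) % 2) + j' % 2 :=
    cast_inj' (n := 4) (by norm_num) (by omega) (by omega) h2
  omega

lemma DD_card {n : ℕ} (hn : 3 ≤ n) (hodd : n % 2 = 1) : (DD n).card = n + 1 := by
  rw [DD, Finset.card_image_of_injOn, Finset.card_range]
  intro j hj j' hj' h
  exact fv_inj hn hodd (by simpa using Nat.lt_succ_iff.mp (Finset.mem_range.mp hj))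
    (by simpa using Nat.lt_succ_iff.mp (Finset.mem_range.mp hj')) h

lemma mem_DD {n : ℕ} {p : ZMod n × ZMod 4} :
    p ∈ DD n ↔ ∃ j ≤ n, fv n j = p := by
  simp [DD, Nat.lt_succ_iff]


lemma vert_helper (r : ℕ) (hr : r < 2) (y : ZMod 4) :
    ∃ t < 2, ((2 * r + t : ℕ) : ZMod 4) ≠ y ∧
      (y = ((2 * r + t : ℕ) : ZMod 4) + 1 ∨ ((2 * r + t : ℕ) : ZMod 4) = y + 1) := by
  interval_cases r <;> revert y <;> decide

lemma total_DD {n : ℕ} (hn : 3 ≤ n) (hodd : n % 2 = 1) :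
    IsTotalDomSet (torusGraph n 4) (↑(DD n) : Set (ZMod n × ZMod 4)) := by
  rintro ⟨x, y⟩
  have hc : x.val < n := val_lt' hn x
  have hx : ((x.val : ℕ) : ZMod n) = x := cast_val' hn x
  by_cases hpar : x.val % 2 = 0
  · -- even column: dominated vertically by the domino in its own column
    obtain ⟨t, ht, hne, hadj⟩ := vert_helper ((x.val / 2) % 2) (Nat.mod_lt _ (by norm_num)) y
    set j := 2 * (x.val / 2) + t with hj
    have hjn : j ≤ n := by omega
    have hj2 : j / 2 = x.val / 2 := by omega
    have hjm : j % 2 = t := by omega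
    refine ⟨fv n j, by rw [Finset.mem_coe]; exact mem_DD.mpr ⟨j, hjn, rfl⟩, ?_⟩
    have hfst : (fv n j).1 = x := by
      simp only [fv, hj2]
      rw [show 2 * (x.val / 2) = x.val by omega, hx]
    have hsnd : (fv n j).2 = ((2 * ((x.val / 2) % 2) + t : ℕ) : ZMod 4) := by
      simp only [fv, hj2, hjm]
    refine ⟨?_, Or.inl ⟨hfst.symm, ?_⟩⟩
    · intro hEq
      have : (fv n j).2 = y := by rw [← hEq]
      rw [hsnd] at this; exact hne this
    · rw [hsnd]; exact hadj
  · -- odd column: dominated horizontally from an adjacent even column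
    have hy4 : y.val < 4 := ZMod.val_lt y
    have hy : ((y.val : ℕ) : ZMod 4) = y := cast_val' (by norm_num) y
    obtain ⟨k', hk', hkp⟩ : ∃ k', (k' = x.val / 2 ∨ k' = x.val / 2 + 1) ∧ k' % 2 = y.val / 2 := by
      rcases Nat.mod_two_eq_zero_or_one (x.val / 2) with he | he
      · rcases Nat.lt_or_ge y.val 2 with h2 | h2
        · exact ⟨x.val / 2, Or.inl rfl, by omega⟩
        · exact ⟨x.val / 2 + 1, Or.inr rfl, by omega⟩
      · rcases Nat.lt_or_ge y.val 2 with h2 | h2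
        · exact ⟨x.val / 2 + 1, Or.inr rfl, by omega⟩
        · exact ⟨x.val / 2, Or.inl rfl, by omega⟩
    set j := 2 * k' + y.val % 2 with hj
    have hjn : j ≤ n := by omega
    have hj2 : j / 2 = k' := by omega
    have hjm : j % 2 = y.val % 2 := by omega
    refine ⟨fv n j, by rw [Finset.mem_coe]; exact mem_DD.mpr ⟨j, hjn, rfl⟩, ?_⟩
    have hsnd : (fv n j).2 = y := by
      simp only [fv, hj2, hjm, hkp]
      rw [show 2 * (y.val / 2) + y.val % 2 = y.val by omega, hy]
    have hfst : (fv n j).1 = ((2 * k' : ℕ) : ZMod n) := by simp only [fv, hj2]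
    have hfne : (fv n j).1 ≠ x := by
      rw [hfst, ← hx]
      intro hEq
      have := cast_inj' hn (by omega) hc hEq
      omega
    refine ⟨?_, Or.inr ⟨hsnd.symm, ?_⟩⟩
    · intro hEq
      exact hfne (by rw [← hEq])
    · rcases hk' with rfl | rfl
      · -- column 2k' = x.val - 1 : x = col + 1
        left
        rw [hfst]
        have : x = ((2 * (x.val / 2) + 1 : ℕ) : ZMod n) := by
          rw [show 2 * (x.val / 2) + 1 = x.val by omega, hx]
        exact this.trans (by push_cast; ring)
      · -- column 2k' = x.val + 1 : col = x + 1
        right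
        rw [hfst]
        have : ((2 * (x.val / 2 + 1) : ℕ) : ZMod n) = x + 1 := by
          rw [show 2 * (x.val / 2 + 1) = x.val + 1 by omega]
          push_cast; rw [hx]
        rw [this]

lemma fv_col_eq {n : ℕ} (hn : 3 ≤ n) (hodd : n % 2 = 1) {j j' : ℕ} (hj : j ≤ n) (hj' : j' ≤ n)
    (h : (fv n j).1 = (fv n j').1) : j / 2 = j' / 2 := by
  have := cast_inj' hn (a := 2 * (j / 2)) (b := 2 * (j' / 2)) (by omega) (by omega) h
  omega

lemma fv_row_ne {n : ℕ} {j j' : ℕ} (hjj : j / 2 = j' / 2) (h : (fv n j).2 ≠ (fv n j').2) :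
    j % 2 ≠ j' % 2 := by
  intro hm
  apply h
  simp only [fv, hjj, hm]

lemma domino_adj {n : ℕ} (hn : 3 ≤ n) (hodd : n % 2 = 1) {p q : ZMod n × ZMod 4}
    (hp : p ∈ DD n) (hq : q ∈ DD n) (h1 : p.1 = q.1) (h2 : p.2 ≠ q.2) :
    (torusGraph n 4).Adj p q := by
  obtain ⟨j, hj, rfl⟩ := mem_DD.mp hp
  obtain ⟨j', hj', rfl⟩ := mem_DD.mp hq
  have hjj : j / 2 = j' / 2 := fv_col_eq hn hodd hj hj' h1
  have hm : j % 2 ≠ j' % 2 := fv_row_ne hjj h2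
  refine ⟨?_, Or.inl ⟨h1, ?_⟩⟩
  · intro hEq; exact h2 (by rw [hEq])
  · -- rows differ by one
    simp only [fv]
    rcases Nat.mod_two_eq_zero_or_one j with h0 | h0
    · right
      rw [hjj, show j % 2 = 0 from h0, show j' % 2 = 1 by omega]
      push_cast; ring
    · left
      rw [hjj, show j % 2 = 1 from h0, show j' % 2 = 0 by omega]
      push_cast; ring

lemma paired_DD {n : ℕ} (hn : 3 ≤ n) (hodd : n % 2 = 1) :
    IsPairedDomSet (torusGraph n 4) (↑(DD n) : Set (ZMod n × ZMod 4)) := by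
  constructor
  · intro v _
    obtain ⟨u, hu, hadj⟩ := total_DD hn hodd v
    exact ⟨u, hu, hadj⟩
  · refine ⟨⟨Set.univ, fun a b => a.val.1 = b.val.1 ∧ a.val.2 ≠ b.val.2, ?_, ?_, ?_⟩, ?_, ?_⟩
    · -- adj_sub
      rintro a b ⟨h1, h2⟩
      rw [SimpleGraph.comap_adj]
      exact domino_adj hn hodd (Finset.mem_coe.mp a.property) (Finset.mem_coe.mp b.property) h1 h2
    · -- edge_vert
      intro a b _; trivial
    · -- symm
      constructor; rintro a b ⟨h1, h2⟩; exact ⟨h1.symm, h2.symm⟩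
    · -- IsMatching
      rintro v -
      obtain ⟨j, hj, hfv⟩ := mem_DD.mp (Finset.mem_coe.mp v.property)
      obtain ⟨jp, hjp⟩ : ∃ jp, jp = 2 * (j / 2) + (1 - j % 2) := ⟨_, rfl⟩
      have hjpn : jp ≤ n := by omega
      have hjp2 : jp / 2 = j / 2 := by omega
      have hjpm : jp % 2 = 1 - j % 2 := by omega
      have hmem : fv n jp ∈ (↑(DD n) : Set (ZMod n × ZMod 4)) :=
        Finset.mem_coe.mpr (mem_DD.mpr ⟨jp, hjpn, rfl⟩)
      have hrowne : (fv n j).2 ≠ (fv n jp).2 := by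
        simp only [fv, hjp2, hjpm]
        intro hEq
        have := cast_inj' (n := 4) (by norm_num)
          (a := 2 * ((j / 2) % 2) + j % 2) (b := 2 * ((j / 2) % 2) + (1 - j % 2))
          (by omega) (by omega) hEq
        omega
      have hcole : (fv n j).1 = (fv n jp).1 := by simp only [fv, hjp2]
      refine ⟨⟨fv n jp, hmem⟩, ⟨?_, ?_⟩, ?_⟩
      · show (v : ZMod n × ZMod 4).1 = (fv n jp).1
        rw [← hfv]; exact hcole
      · show (v : ZMod n × ZMod 4).2 ≠ (fv n jp).2
        rw [← hfv]; exact hrowne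
      · -- uniqueness
        rintro ⟨w, hw⟩ ⟨hw1, hw2⟩
        have hw1' : (v : ZMod n × ZMod 4).1 = w.1 := hw1
        have hw2' : (v : ZMod n × ZMod 4).2 ≠ w.2 := hw2
        obtain ⟨j'', hj'', hfv''⟩ := mem_DD.mp (Finset.mem_coe.mp hw)
        have hcol : (fv n j).1 = (fv n j'').1 := by rw [hfv, hfv'']; exact hw1'
        have hrow : (fv n j).2 ≠ (fv n j'').2 := by rw [hfv, hfv'']; exact hw2'
        have hjj : j / 2 = j'' / 2 := fv_col_eq hn hodd hj hj'' hcol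
        have hm : j % 2 ≠ j'' % 2 := fv_row_ne hjj hrow
        have : j'' = jp := by omega
        apply Subtype.ext
        show w = fv n jp
        rw [← hfv'', this]
    · -- IsSpanning
      intro v; trivial

lemma double_count {V : Type*} (S T : Finset V) (R : V → V → Prop) [DecidableRel R] :
    ∑ v ∈ S, (T.filter (fun u => R v u)).card = ∑ u ∈ T, (S.filter (fun v => R v u)).card := by
  simp only [Finset.card_filter]
  rw [Finset.sum_comm]

lemma col_rec_solve {n : ℕ} (hn : 3 ≤ n) (hodd : n % 2 = 1) (a : ℕ → ℕ)
    (hrec : ∀ c, a c + 2 * a (c + 1) + a (c + 2) = 4)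
    (hper : ∀ c, a (c + n) = a c) : ∀ c, a c = 1 := by
  set s : ℕ → ℤ := fun c => (-1) ^ c * ((a c : ℤ) - 1) with hsdef
  have hs : ∀ c, s (c + 2) = 2 * s (c + 1) - s c := by
    intro c
    have h4 : (a c : ℤ) + 2 * (a (c + 1) : ℤ) + (a (c + 2) : ℤ) = 4 := by
      exact_mod_cast hrec c
    simp only [hsdef]
    have e1 : ((-1 : ℤ)) ^ (c + 1) = -(-1) ^ c := by ring
    have e2 : ((-1 : ℤ)) ^ (c + 2) = (-1) ^ c := by ring
    rw [e1, e2]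
    linear_combination ((-1 : ℤ)) ^ c * h4
  have hlin : ∀ c : ℕ, s c = s 0 + (c : ℤ) * (s 1 - s 0) := by
    intro c
    induction c using Nat.strong_induction_on with
    | _ c ih =>
      match c with
      | 0 => simp
      | 1 => push_cast; ring
      | (c + 2) =>
        rw [hs c, ih (c + 1) (by omega), ih c (by omega)]
        push_cast; ring
  have hanti : ∀ c, s (c + n) = - s c := by
    intro c
    simp only [hsdef, hper, pow_add]
    rw [Odd.neg_one_pow (Nat.odd_iff.mpr hodd)]
    ring
  have hA : s 0 + (n : ℤ) * (s 1 - s 0) = - s 0 := by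
    rw [← hlin n]
    have := hanti 0
    simpa using this
  have hB : s 0 + ((n : ℤ) + 1) * (s 1 - s 0) = - s 1 := by
    have h1 := hlin (n + 1)
    have h2 := hanti 1
    rw [show 1 + n = n + 1 by ring] at h2
    rw [h2] at h1
    push_cast at h1
    linarith [h1]
  have hd : s 1 - s 0 = 0 := by linarith
  have hs0 : s 0 = 0 := by
    rw [hd, mul_zero, add_zero] at hA
    linarith
  intro c
  have : s c = 0 := by rw [hlin c, hd, hs0]; ring
  have hz : ((a c : ℤ) - 1) = 0 := by
    rcases mul_eq_zero.mp this with hh | hh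
    · exact absurd hh (pow_ne_zero _ (by norm_num))
    · exact hh
  have : (a c : ℤ) = 1 := by linarith
  exact_mod_cast this

lemma torus_adj_iff {n m : ℕ} {a b : ZMod n × ZMod m} :
    (torusGraph n m).Adj a b ↔ a ≠ b ∧ ((a.1 = b.1 ∧ (a.2 = b.2 + 1 ∨ b.2 = a.2 + 1)) ∨
      (a.2 = b.2 ∧ (a.1 = b.1 + 1 ∨ b.1 = a.1 + 1))) := Iff.rfl

lemma zmod4_facts : ∀ w : ZMod 4, w + 1 ≠ w ∧ w - 1 ≠ w ∧ w + 1 ≠ w - 1 ∧ w = (w - 1) + 1 := by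
  decide

lemma col_filter_card {n : ℕ} [NeZero n] (hn : 3 ≤ n) (hodd : n % 2 = 1) (c : ℕ)
    (u : ZMod n × ZMod 4) :
    (Finset.univ.filter (fun v : ZMod n × ZMod 4 =>
        v.1 = ((c + 1 : ℕ) : ZMod n) ∧ (torusGraph n 4).Adj v u)).card
    = 2 * (if u.1 = ((c + 1 : ℕ) : ZMod n) then 1 else 0)
      + (if u.1 = ((c : ℕ) : ZMod n) then 1 else 0)
      + (if u.1 = ((c + 2 : ℕ) : ZMod n) then 1 else 0) := by
  obtain ⟨z0, hz0⟩ : ∃ z : ZMod n, z = ((c : ℕ) : ZMod n) := ⟨_, rfl⟩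
  obtain ⟨z1, hz1⟩ : ∃ z : ZMod n, z = ((c + 1 : ℕ) : ZMod n) := ⟨_, rfl⟩
  obtain ⟨z2, hz2⟩ : ∃ z : ZMod n, z = ((c + 2 : ℕ) : ZMod n) := ⟨_, rfl⟩
  rw [← hz0, ← hz1, ← hz2]
  have h10 : z1 = z0 + 1 := by rw [hz0, hz1]; push_cast; ring
  have h21 : z2 = z1 + 1 := by rw [hz2, hz1]; push_cast; ring
  have h1ne0 : (1 : ZMod n) ≠ 0 := one_ne_zero' hn
  have h2ne0 : (2 : ZMod n) ≠ 0 := two_ne_zero' hn hodd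
  have hne01 : z0 ≠ z1 := by
    rw [h10]; intro hh; exact h1ne0 (left_eq_add.mp hh)
  have hne12 : z1 ≠ z2 := by
    rw [h21]; intro hh; exact h1ne0 (left_eq_add.mp hh)
  have hne02 : z0 ≠ z2 := by
    rw [h21, h10, add_assoc, one_add_one_eq_two]
    intro hh; exact h2ne0 (left_eq_add.mp hh)
  by_cases hu1 : u.1 = z1
  · -- vertical: exactly the two vertical neighbours
    rw [if_pos hu1, if_neg (by rw [hu1]; exact hne01.symm), if_neg (by rw [hu1]; exact hne12)]
    have hset : Finset.univ.filter (fun v : ZMod n × ZMod 4 =>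
        v.1 = z1 ∧ (torusGraph n 4).Adj v u)
        = {(u.1, u.2 + 1), (u.1, u.2 - 1)} := by
      ext v
      simp only [Finset.mem_filter, Finset.mem_univ, true_and, Finset.mem_insert,
        Finset.mem_singleton]
      constructor
      · rintro ⟨hv1, hadj⟩
        rw [torus_adj_iff] at hadj
        obtain ⟨hne, hcase⟩ := hadj
        rcases hcase with ⟨ha, hb⟩ | ⟨ha, hb⟩
        · rcases hb with hb | hb
          · left; exact Prod.ext ha hb
          · right; refine Prod.ext ha ?_
            rw [eq_sub_iff_add_eq]; exact hb.symm
        · exfalso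
          rcases hb with hb | hb
          · rw [hv1, hu1] at hb
            exact h1ne0 (left_eq_add.mp hb)
          · rw [hv1, hu1] at hb
            exact h1ne0 (left_eq_add.mp hb)
      · rintro (rfl | rfl)
        · refine ⟨hu1, ?_⟩
          rw [torus_adj_iff]
          refine ⟨?_, Or.inl ⟨rfl, Or.inl rfl⟩⟩
          intro hh
          exact (zmod4_facts u.2).1 (congrArg Prod.snd hh)
        · refine ⟨hu1, ?_⟩
          rw [torus_adj_iff]
          refine ⟨?_, Or.inl ⟨rfl, Or.inr (zmod4_facts u.2).2.2.2⟩⟩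
          intro hh
          exact (zmod4_facts u.2).2.1 (congrArg Prod.snd hh)
    rw [hset]
    rw [Finset.card_insert_of_notMem, Finset.card_singleton]
    simp only [Finset.mem_singleton]
    intro hh
    exact (zmod4_facts u.2).2.2.1 (congrArg Prod.snd hh)
  · by_cases hu0 : u.1 = z0
    · -- u one column to the left
      rw [if_neg hu1, if_pos hu0, if_neg (by rw [hu0]; exact hne02)]
      have hset : Finset.univ.filter (fun v : ZMod n × ZMod 4 =>
          v.1 = z1 ∧ (torusGraph n 4).Adj v u) = {(z1, u.2)} := by
        ext v
        simp only [Finset.mem_filter, Finset.mem_univ, true_and, Finset.mem_singleton]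
        constructor
        · rintro ⟨hv1, hadj⟩
          rw [torus_adj_iff] at hadj
          obtain ⟨hne, hcase⟩ := hadj
          rcases hcase with ⟨ha, hb⟩ | ⟨ha, hb⟩
          · exact absurd (by rw [← hv1, ha, hu0] : z1 = z0) hne01.symm
          · exact Prod.ext hv1 ha
        · rintro rfl
          refine ⟨rfl, ?_⟩
          rw [torus_adj_iff]
          refine ⟨?_, Or.inr ⟨rfl, Or.inl (by rw [hu0, ← h10])⟩⟩
          intro hh
          exact hne01 (by rw [← hu0]; exact (congrArg Prod.fst hh).symm)
      rw [hset, Finset.card_singleton]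
    · by_cases hu2 : u.1 = z2
      · -- u one column to the right
        rw [if_neg hu1, if_neg hu0, if_pos hu2]
        have hset : Finset.univ.filter (fun v : ZMod n × ZMod 4 =>
            v.1 = z1 ∧ (torusGraph n 4).Adj v u) = {(z1, u.2)} := by
          ext v
          simp only [Finset.mem_filter, Finset.mem_univ, true_and, Finset.mem_singleton]
          constructor
          · rintro ⟨hv1, hadj⟩
            rw [torus_adj_iff] at hadj
            obtain ⟨hne, hcase⟩ := hadj
            rcases hcase with ⟨ha, hb⟩ | ⟨ha, hb⟩
            · exact absurd (by rw [← hv1, ha, hu2] : z1 = z2) hne12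
            · exact Prod.ext hv1 ha
          · rintro rfl
            refine ⟨rfl, ?_⟩
            rw [torus_adj_iff]
            refine ⟨?_, Or.inr ⟨rfl, Or.inr (by rw [hu2, h21])⟩⟩
            intro hh
            exact hne12 (by rw [← hu2]; exact congrArg Prod.fst hh)
        rw [hset, Finset.card_singleton]
      · -- u far away : empty
        rw [if_neg hu1, if_neg hu0, if_neg hu2]
        have hset : Finset.univ.filter (fun v : ZMod n × ZMod 4 =>
            v.1 = z1 ∧ (torusGraph n 4).Adj v u) = ∅ := by
          ext v
          simp only [Finset.mem_filter, Finset.mem_univ, true_and, Finset.notMem_empty,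
            iff_false, not_and]
          intro hv1 hadj
          rw [torus_adj_iff] at hadj
          obtain ⟨hne, hcase⟩ := hadj
          rcases hcase with ⟨ha, hb⟩ | ⟨ha, hb⟩
          · exact hu1 (by rw [← ha, hv1])
          · rcases hb with hb | hb
            · apply hu0
              have : u.1 + 1 = z0 + 1 := by rw [← hb, hv1, h10]
              exact add_right_cancel this
            · exact hu2 (by rw [hb, hv1, h21])
        rw [hset, Finset.card_empty]

lemma even_of_involution {α : Type*} [Fintype α] [DecidableEq α] (f : α → α) (g : α → ℕ)
    (hg : Function.Injective g) (h1 : ∀ x, f (f x) = x) (h2 : ∀ x, f x ≠ x) :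
    Even (Fintype.card α) := by
  classical
  set A := Finset.univ.filter (fun x => g x < g (f x)) with hA
  set B := Finset.univ.filter (fun x => g (f x) < g x) with hB
  have hmemA : ∀ x, x ∈ A ↔ g x < g (f x) := by intro x; simp [hA]
  have hmemB : ∀ x, x ∈ B ↔ g (f x) < g x := by intro x; simp [hB]
  have hcard : A.card = B.card := by
    apply Finset.card_bij (fun x _ => f x)
    · intro x hx; rw [hmemB, h1]; exact (hmemA x).mp hx
    · intro x hx y hy hxy
      have := congrArg f hxy; rwa [h1, h1] at this
    · intro y hy
      refine ⟨f y, ?_, h1 y⟩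
      rw [hmemA, h1]; exact (hmemB y).mp hy
  have hsplit : Finset.univ = A ∪ B := by
    ext x
    simp only [Finset.mem_union, hmemA, hmemB, Finset.mem_univ, true_iff]
    rcases lt_trichotomy (g x) (g (f x)) with hlt | heq | hgt
    · exact Or.inl hlt
    · exact absurd (hg heq) (Ne.symm (h2 x))
    · exact Or.inr hgt
  have hdisj : Disjoint A B := by
    rw [Finset.disjoint_left]
    intro x hxA hxB
    exact absurd ((hmemA x).mp hxA) (not_lt.mpr ((hmemB x).mp hxB).le)
  rw [← Finset.card_univ, hsplit, Finset.card_union_of_disjoint hdisj, hcard]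
  exact ⟨B.card, by ring⟩

lemma lower_bound {n : ℕ} (hn : 3 ≤ n) (hodd : n % 2 = 1)
    (D : Set (ZMod n × ZMod 4)) (hD : IsTotalDomSet (torusGraph n 4) D) :
    n + 1 ≤ D.ncard := by
  haveI : NeZero n := ⟨by omega⟩
  by_contra hle
  push_neg at hle
  have hfin : D.Finite := Set.toFinite D
  set DF := hfin.toFinset with hDFdef
  have hmemDF : ∀ u, u ∈ DF ↔ u ∈ D := fun u => Set.Finite.mem_toFinset hfin
  have hcardDF : DF.card ≤ n := by
    have h := Set.ncard_eq_toFinset_card D hfin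
    rw [hDFdef]
    omega
  have hcardV : Fintype.card (ZMod n × ZMod 4) = 4 * n := by
    rw [Fintype.card_prod, ZMod.card, ZMod.card]; ring
  set f : ZMod n × ZMod 4 → ℕ :=
    fun v => (DF.filter (fun u => (torusGraph n 4).Adj v u)).card with hfdef
  have h1 : ∀ v, 1 ≤ f v := by
    intro v
    obtain ⟨u, hu, hadj⟩ := hD v
    exact Finset.card_pos.mpr ⟨u, Finset.mem_filter.mpr ⟨(hmemDF u).mpr hu, hadj⟩⟩
  have hnb : ∀ u : ZMod n × ZMod 4,
      (Finset.univ.filter (fun v => (torusGraph n 4).Adj v u)).card ≤ 4 := by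
    intro u
    have hsub : Finset.univ.filter (fun v => (torusGraph n 4).Adj v u) ⊆
        {(u.1, u.2 + 1), (u.1, u.2 - 1), (u.1 + 1, u.2), (u.1 - 1, u.2)} := by
      intro v hv
      obtain ⟨-, hadj⟩ := Finset.mem_filter.mp hv
      rw [torus_adj_iff] at hadj
      obtain ⟨hne, hcase⟩ := hadj
      simp only [Finset.mem_insert, Finset.mem_singleton]
      rcases hcase with ⟨ha, hb | hb⟩ | ⟨ha, hb | hb⟩
      · exact Or.inl (Prod.ext ha hb)
      · exact Or.inr (Or.inl (Prod.ext ha (eq_sub_iff_add_eq.mpr hb.symm)))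
      · exact Or.inr (Or.inr (Or.inl (Prod.ext hb ha)))
      · exact Or.inr (Or.inr (Or.inr (Prod.ext (eq_sub_iff_add_eq.mpr hb.symm) ha)))
    refine (Finset.card_le_card hsub).trans ?_
    have c1 := Finset.card_insert_le (u.1, u.2 + 1)
      ({(u.1, u.2 - 1), (u.1 + 1, u.2), (u.1 - 1, u.2)} : Finset (ZMod n × ZMod 4))
    have c2 := Finset.card_insert_le (u.1, u.2 - 1)
      ({(u.1 + 1, u.2), (u.1 - 1, u.2)} : Finset (ZMod n × ZMod 4))
    have c3 := Finset.card_insert_le (u.1 + 1, u.2)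
      ({(u.1 - 1, u.2)} : Finset (ZMod n × ZMod 4))
    have c4 := Finset.card_singleton ((u.1 - 1, u.2))
    omega
  have hub : ∑ v, f v ≤ 4 * n := by
    rw [hfdef]
    rw [double_count Finset.univ DF (torusGraph n 4).Adj]
    calc ∑ u ∈ DF, (Finset.univ.filter (fun v => (torusGraph n 4).Adj v u)).card
        ≤ ∑ _u ∈ DF, 4 := Finset.sum_le_sum (fun u _ => hnb u)
      _ = DF.card * 4 := Finset.sum_const 4
      _ ≤ 4 * n := by omega
  have hlb : 4 * n ≤ ∑ v, f v := by
    calc 4 * n = Finset.univ.card * 1 := by rw [Finset.card_univ, hcardV]; ring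
      _ = ∑ _v : ZMod n × ZMod 4, 1 := (Finset.sum_const 1).symm
      _ ≤ ∑ v, f v := Finset.sum_le_sum (fun v _ => h1 v)
  have hsum : ∑ v, f v = 4 * n := le_antisymm hub hlb
  have hf1 : ∀ v, f v = 1 := by
    intro v0
    by_contra hv0
    have hlt : ∑ _v : ZMod n × ZMod 4, 1 < ∑ v, f v :=
      Finset.sum_lt_sum (fun v _ => h1 v) ⟨v0, Finset.mem_univ v0, by have := h1 v0; omega⟩
    rw [Finset.sum_const, Finset.card_univ, hcardV, smul_eq_mul, mul_one, hsum] at hlt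
    omega
  have huniq : ∀ v u u', u ∈ DF → (torusGraph n 4).Adj v u → u' ∈ DF →
      (torusGraph n 4).Adj v u' → u = u' := by
    intro v u u' hu hau hu' hau'
    exact Finset.card_le_one.mp (le_of_eq (hf1 v))
      u (Finset.mem_filter.mpr ⟨hu, hau⟩) u' (Finset.mem_filter.mpr ⟨hu', hau'⟩)
  -- column counts
  set a : ℕ → ℕ := fun c => (DF.filter (fun u => u.1 = ((c : ℕ) : ZMod n))).card with hadef
  have hper : ∀ c, a (c + n) = a c := by
    intro c
    have : ((c + n : ℕ) : ZMod n) = ((c : ℕ) : ZMod n) := by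
      push_cast; simp
    simp only [hadef, this]
  have hrec : ∀ c, a c + 2 * a (c + 1) + a (c + 2) = 4 := by
    intro c
    have hS : ∑ v ∈ Finset.univ.filter
        (fun v : ZMod n × ZMod 4 => v.1 = ((c + 1 : ℕ) : ZMod n)), f v = 4 := by
      rw [Finset.sum_congr rfl (fun v _ => hf1 v), Finset.sum_const, smul_eq_mul, mul_one]
      have himg : Finset.univ.filter
          (fun v : ZMod n × ZMod 4 => v.1 = ((c + 1 : ℕ) : ZMod n))
          = Finset.univ.image (fun y : ZMod 4 => (((c + 1 : ℕ) : ZMod n), y)) := by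
        ext v
        simp only [Finset.mem_filter, Finset.mem_univ, true_and, Finset.mem_image]
        constructor
        · intro hv
          exact ⟨v.2, by rw [← hv]⟩
        · rintro ⟨y, -, rfl⟩; rfl
      rw [himg, Finset.card_image_of_injective _
        (fun y y' hyy => congrArg Prod.snd hyy), Finset.card_univ, ZMod.card]
    rw [hfdef] at hS
    rw [double_count (Finset.univ.filter
      (fun v : ZMod n × ZMod 4 => v.1 = ((c + 1 : ℕ) : ZMod n))) DF
      (torusGraph n 4).Adj] at hS
    have hcong : ∀ u ∈ DF, ((Finset.univ.filter
        (fun v : ZMod n × ZMod 4 => v.1 = ((c + 1 : ℕ) : ZMod n))).filter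
          (fun v => (torusGraph n 4).Adj v u)).card
        = 2 * (if u.1 = ((c + 1 : ℕ) : ZMod n) then 1 else 0)
          + (if u.1 = ((c : ℕ) : ZMod n) then 1 else 0)
          + (if u.1 = ((c + 2 : ℕ) : ZMod n) then 1 else 0) := by
      intro u _
      rw [Finset.filter_filter]
      exact col_filter_card hn hodd c u
    rw [Finset.sum_congr rfl hcong] at hS
    rw [Finset.sum_add_distrib, Finset.sum_add_distrib, ← Finset.mul_sum] at hS
    have e0 : ∑ u ∈ DF, (if u.1 = ((c : ℕ) : ZMod n) then 1 else 0) = a c :=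
      (Finset.card_filter _ _).symm
    have e1 : ∑ u ∈ DF, (if u.1 = ((c + 1 : ℕ) : ZMod n) then 1 else 0) = a (c + 1) :=
      (Finset.card_filter _ _).symm
    have e2 : ∑ u ∈ DF, (if u.1 = ((c + 2 : ℕ) : ZMod n) then 1 else 0) = a (c + 2) :=
      (Finset.card_filter _ _).symm
    rw [e0, e1, e2] at hS
    omega
  have hcol1 : ∀ c, a c = 1 := col_rec_solve hn hodd a hrec hper
  have hcolx : ∀ x : ZMod n, (DF.filter (fun u => u.1 = x)).card = 1 := by
    intro x
    have := hcol1 x.val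
    simp only [hadef] at this
    rwa [cast_val' hn x] at this
  have hcol : ∀ (x : ZMod n) u u', u ∈ DF → u.1 = x → u' ∈ DF → u'.1 = x → u = u' := by
    intro x u u' hu h1' hu' h2'
    exact Finset.card_le_one.mp (le_of_eq (hcolx x))
      u (Finset.mem_filter.mpr ⟨hu, h1'⟩) u' (Finset.mem_filter.mpr ⟨hu', h2'⟩)
  have hex : ∀ x : ZMod n, ∃ u, u ∈ DF ∧ u.1 = x := by
    intro x
    obtain ⟨u, hu⟩ := Finset.card_pos.mp (by rw [hcolx x]; norm_num)
    obtain ⟨hu1, hu2⟩ := Finset.mem_filter.mp hu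
    exact ⟨u, hu1, hu2⟩
  choose dc hdc1 hdc2 using hex
  have hnbr : ∀ x : ZMod n, ∃ u, u ∈ DF ∧ (torusGraph n 4).Adj (dc x) u := by
    intro x
    obtain ⟨u, hu, hadj⟩ := hD (dc x)
    exact ⟨u, (hmemDF u).mpr hu, hadj⟩
  choose nb hnb1 hnb2 using hnbr
  have hnbcol : ∀ x, (nb x).1 ≠ x := by
    intro x hEq
    have heq : nb x = dc x := hcol x _ _ (hnb1 x) hEq (hdc1 x) (hdc2 x)
    have hadj := hnb2 x
    rw [heq] at hadj
    exact (torusGraph n 4).loopless.irrefl _ hadj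
  set F : ZMod n → ZMod n := fun x => (nb x).1 with hFdef
  have hnb_dc : ∀ x, nb x = dc (F x) := fun x =>
    hcol (F x) _ _ (hnb1 x) rfl (hdc1 _) (hdc2 _)
  have hFF : ∀ x, F (F x) = x := by
    intro x
    have hadj : (torusGraph n 4).Adj (dc (F x)) (dc x) := by
      rw [← hnb_dc x]
      exact ((hnb2 x).symm : (torusGraph n 4).Adj (nb x) (dc x))
    have hkey : nb (F x) = dc x :=
      huniq (dc (F x)) _ _ (hnb1 (F x)) (hnb2 (F x)) (hdc1 x) hadj
    show (nb (F x)).1 = x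
    rw [hkey]
    exact hdc2 x
  have heven : Even (Fintype.card (ZMod n)) := by
    refine even_of_involution F (fun x => x.val) ?_ hFF (fun x => hnbcol x)
    intro x y hxy
    have hv : x.val = y.val := hxy
    rw [← cast_val' hn x, ← cast_val' hn y, hv]
  rw [ZMod.card] at heven
  obtain ⟨t, ht⟩ := heven
  omega

lemma paired_is_total {V : Type*} (G : SimpleGraph V) (D : Set V)
    (h : IsPairedDomSet G D) : IsTotalDomSet G D := by
  obtain ⟨hd, M, hM⟩ := h
  intro v
  by_cases hv : v ∈ D
  · obtain ⟨w, hw, -⟩ := hM.1 (hM.2 ⟨v, hv⟩)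
    have := M.adj_sub hw
    rw [SimpleGraph.comap_adj] at this
    exact ⟨w.val, w.property, this⟩
  · exact hd v hv

/- #### Lower bound -/

end Stmt5Aux

theorem stmt5 (n : ℕ) (hn : 3 ≤ n) (h : n % 4 = 1 ∨ n % 4 = 3) :
    totalDomNum (torusGraph n 4) = n + 1 ∧
    pairedDomNum (torusGraph n 4) = n + 1 := by
  have hodd : n % 2 = 1 := by omega
  have hmemT : (n + 1) ∈ {k | ∃ D : Set (ZMod n × ZMod 4),
      IsTotalDomSet (torusGraph n 4) D ∧ D.ncard = k} :=
    ⟨↑(Stmt5Aux.DD n), Stmt5Aux.total_DD hn hodd, by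
      rw [Set.ncard_coe_finset]; exact Stmt5Aux.DD_card hn hodd⟩
  have hmemP : (n + 1) ∈ {k | ∃ D : Set (ZMod n × ZMod 4),
      IsPairedDomSet (torusGraph n 4) D ∧ D.ncard = k} :=
    ⟨↑(Stmt5Aux.DD n), Stmt5Aux.paired_DD hn hodd, by
      rw [Set.ncard_coe_finset]; exact Stmt5Aux.DD_card hn hodd⟩
  constructor
  · refine le_antisymm (Nat.sInf_le hmemT) (le_csInf ⟨_, hmemT⟩ ?_)
    rintro k ⟨D, hDt, rfl⟩
    exact Stmt5Aux.lower_bound hn hodd D hDt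
  · refine le_antisymm (Nat.sInf_le hmemP) (le_csInf ⟨_, hmemP⟩ ?_)
    rintro k ⟨D, hDp, rfl⟩
    exact Stmt5Aux.lower_bound hn hodd D (Stmt5Aux.paired_is_total _ _ hDp)
end

section
/- For n ≡ 2 (mod 4) with n ≥ 6, the paired domination number of C_n × C_4 is at most n + 2. -/
open SimpleGraph

/-! ### Auxiliary construction -/

/-- Row-partner function on `ZMod 4`: swaps 0↔1 and 2↔3. -/
def sigma4 : ZMod 4 → ZMod 4 := fun j => if j = 0 then 1 else if j = 1 then 0 else if j = 2 then 3 else 2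

/-- Enumeration of a paired dominating set of `C_n × C_4` of size `n+2`. -/
def gfun (n : ℕ) (k : ℕ) : ZMod n × ZMod 4 :=
  if k < n then (((2 * (k / 2) : ℕ) : ZMod n), ((2 * ((k / 2) % 2) + k % 2 : ℕ) : ZMod 4))
  else (((n - 1 : ℕ) : ZMod n), ((k - n + 2 : ℕ) : ZMod 4))

/-- The paired dominating set. -/
def Dset (n : ℕ) : Set (ZMod n × ZMod 4) := ↑((Finset.range (n + 2)).image (gfun n))

section Facts
variable {n : ℕ} (hn : 6 ≤ n) (h : n % 4 = 2)

lemma zmod4_cases (b : ZMod 4) : b = 0 ∨ b = 1 ∨ b = 2 ∨ b = 3 := by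
  revert b; decide

lemma zmod4_val_eq {b : ZMod 4} {m : ℕ} (hm : m < 4) (hv : b.val = m) : b = (m : ZMod 4) := by
  have : ((b.val : ℕ) : ZMod 4) = (m : ZMod 4) := by rw [hv]
  rwa [ZMod.natCast_val, ZMod.cast_id] at this

include hn h in
lemma mem_Dset_iff (p : ZMod n × ZMod 4) :
    p ∈ Dset n ↔ ((p.1.val % 4 = 0 ∧ (p.2 = 0 ∨ p.2 = 1)) ∨
      (p.1.val % 4 = 2 ∧ (p.2 = 2 ∨ p.2 = 3)) ∨
      (p.1.val = n - 1 ∧ (p.2 = 2 ∨ p.2 = 3))) := by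
  have hnz : NeZero n := ⟨by omega⟩
  constructor
  · rintro hp
    simp only [Dset, Finset.coe_image, Set.mem_image, Finset.mem_coe, Finset.mem_range] at hp
    obtain ⟨k, hk, rfl⟩ := hp
    unfold gfun
    by_cases hkn : k < n
    · simp only [hkn, if_pos]
      have hcol : (((2 * (k / 2) : ℕ) : ZMod n)).val = 2 * (k / 2) :=
        ZMod.val_cast_of_lt (by omega)
      by_cases hpar : (k / 2) % 2 = 0
      · left
        constructor
        · rw [hcol]; omega
        · rcases Nat.mod_two_eq_zero_or_one k with hk2 | hk2
          · left; rw [hpar, hk2]; norm_num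
          · right; rw [hpar, hk2]; norm_num
      · right; left
        have hpar' : (k / 2) % 2 = 1 := by omega
        constructor
        · rw [hcol]; omega
        · rcases Nat.mod_two_eq_zero_or_one k with hk2 | hk2
          · left; rw [hpar', hk2]; norm_num
          · right; rw [hpar', hk2]; norm_num
    · simp only [hkn, if_neg, not_false_iff]
      right; right
      constructor
      · exact ZMod.val_cast_of_lt (by omega)
      · have : k = n ∨ k = n + 1 := by omega
        rcases this with rfl | rfl
        · left; norm_num
        · right
          have : n + 1 - n + 2 = 3 := by omega
          rw [this]; norm_num
  · rintro (⟨h4, hb⟩ | ⟨h4, hb⟩ | ⟨h4, hb⟩)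
    all_goals
      simp only [Dset, Finset.coe_image, Set.mem_image, Finset.mem_coe, Finset.mem_range]
    · -- column ≡ 0 mod 4, rows 0,1
      have hi : p.1.val < n := ZMod.val_lt p.1
      have hb' : p.2.val = 0 ∨ p.2.val = 1 := by
        rcases hb with h' | h'
        · left; rw [h']; rfl
        · right; rw [h']; rfl
      refine ⟨p.1.val + p.2.val, by omega, ?_⟩
      have hkn : p.1.val + p.2.val < n := by omega
      unfold gfun
      rw [if_pos hkn]
      have hdiv : (p.1.val + p.2.val) / 2 = p.1.val / 2 := by omega
      have hc : 2 * ((p.1.val + p.2.val) / 2) = p.1.val := by omega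
      have hr : 2 * (((p.1.val + p.2.val) / 2) % 2) + (p.1.val + p.2.val) % 2 = p.2.val := by omega
      rw [hc, hr]
      rw [ZMod.natCast_val, ZMod.cast_id, ZMod.natCast_val, ZMod.cast_id]
    · -- column ≡ 2 mod 4, rows 2,3
      have hi : p.1.val < n := ZMod.val_lt p.1
      have hb' : p.2.val = 2 ∨ p.2.val = 3 := by
        rcases hb with h' | h'
        · left; rw [h']; rfl
        · right; rw [h']; rfl
      have hile : p.1.val + 4 ≤ n := by omega
      refine ⟨p.1.val + (p.2.val - 2), by omega, ?_⟩
      have hkn : p.1.val + (p.2.val - 2) < n := by omega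
      unfold gfun
      rw [if_pos hkn]
      have hc : 2 * ((p.1.val + (p.2.val - 2)) / 2) = p.1.val := by omega
      have hr : 2 * (((p.1.val + (p.2.val - 2)) / 2) % 2) + (p.1.val + (p.2.val - 2)) % 2
          = p.2.val := by omega
      rw [hc, hr]
      rw [ZMod.natCast_val, ZMod.cast_id, ZMod.natCast_val, ZMod.cast_id]
    · -- last column, rows 2,3
      have hb' : p.2.val = 2 ∨ p.2.val = 3 := by
        rcases hb with h' | h'
        · left; rw [h']; rfl
        · right; rw [h']; rfl
      refine ⟨n + (p.2.val - 2), by omega, ?_⟩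
      unfold gfun
      rw [if_neg (by omega)]
      have hr : n + (p.2.val - 2) - n + 2 = p.2.val := by omega
      rw [hr, ZMod.natCast_val, ZMod.cast_id]
      have : ((n - 1 : ℕ) : ZMod n) = p.1 := by
        have h1 : (((n - 1 : ℕ) : ZMod n)).val = n - 1 := ZMod.val_cast_of_lt (by omega)
        have h2 : ((p.1.val : ℕ) : ZMod n) = p.1 := by rw [ZMod.natCast_val, ZMod.cast_id]
        rw [← h2, h4]
      rw [this]

include hn h in
lemma Dset_sigma_closed {p : ZMod n × ZMod 4} (hp : p ∈ Dset n) :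
    (p.1, sigma4 p.2) ∈ Dset n := by
  rw [mem_Dset_iff hn h] at hp ⊢
  rcases hp with ⟨h4, hb⟩ | ⟨h4, hb⟩ | ⟨h4, hb⟩
  · left
    refine ⟨h4, ?_⟩
    rcases hb with h' | h'
    · right; show sigma4 p.2 = 1; rw [h']; rfl
    · left; show sigma4 p.2 = 0; rw [h']; rfl
  · right; left
    refine ⟨h4, ?_⟩
    rcases hb with h' | h'
    · right; show sigma4 p.2 = 3; rw [h']; rfl
    · left; show sigma4 p.2 = 2; rw [h']; rfl
  · right; right
    refine ⟨h4, ?_⟩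
    rcases hb with h' | h'
    · right; show sigma4 p.2 = 3; rw [h']; rfl
    · left; show sigma4 p.2 = 2; rw [h']; rfl

lemma vert_adj {n : ℕ} (a : ZMod n) (r s : ZMod 4) (hne : r ≠ s)
    (hrs : r = s + 1 ∨ s = r + 1) : (torusGraph n 4).Adj (a, r) (a, s) :=
  ⟨fun heq => hne (congrArg Prod.snd heq), Or.inl ⟨rfl, hrs⟩⟩

include hn h in
lemma Dset_total_dom : IsTotalDomSet (torusGraph n 4) (Dset n) := by
  have hnz : NeZero n := ⟨by omega⟩
  rintro ⟨a, b⟩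
  set i := a.val with hi
  have hilt : i < n := ZMod.val_lt a
  -- helper to show membership
  have hmem := mem_Dset_iff (n := n) hn h
  by_cases hlast : i = n - 1
  · -- column n-1 has rows 2,3 in D
    have h2 : (a, (2 : ZMod 4)) ∈ Dset n := by
      rw [hmem]; right; right; exact ⟨hlast, Or.inl rfl⟩
    have h3 : (a, (3 : ZMod 4)) ∈ Dset n := by
      rw [hmem]; right; right; exact ⟨hlast, Or.inr rfl⟩
    rcases zmod4_cases b with rfl | rfl | rfl | rfl
    · exact ⟨(a, 3), h3, vert_adj a 0 3 (by decide) (by decide)⟩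
    · exact ⟨(a, 2), h2, vert_adj a 1 2 (by decide) (by decide)⟩
    · exact ⟨(a, 3), h3, vert_adj a 2 3 (by decide) (by decide)⟩
    · exact ⟨(a, 2), h2, vert_adj a 3 2 (by decide) (by decide)⟩
  · by_cases hpar : i % 2 = 0
    · rcases (by omega : i % 4 = 0 ∨ i % 4 = 2) with h4 | h4
      · have h0 : (a, (0 : ZMod 4)) ∈ Dset n := by rw [hmem]; left; exact ⟨h4, Or.inl rfl⟩
        have h1 : (a, (1 : ZMod 4)) ∈ Dset n := by rw [hmem]; left; exact ⟨h4, Or.inr rfl⟩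
        rcases zmod4_cases b with rfl | rfl | rfl | rfl
        · exact ⟨(a, 1), h1, vert_adj a 0 1 (by decide) (by decide)⟩
        · exact ⟨(a, 0), h0, vert_adj a 1 0 (by decide) (by decide)⟩
        · exact ⟨(a, 1), h1, vert_adj a 2 1 (by decide) (by decide)⟩
        · exact ⟨(a, 0), h0, vert_adj a 3 0 (by decide) (by decide)⟩
      · have h2 : (a, (2 : ZMod 4)) ∈ Dset n := by rw [hmem]; right; left; exact ⟨h4, Or.inl rfl⟩
        have h3 : (a, (3 : ZMod 4)) ∈ Dset n := by rw [hmem]; right; left; exact ⟨h4, Or.inr rfl⟩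
        rcases zmod4_cases b with rfl | rfl | rfl | rfl
        · exact ⟨(a, 3), h3, vert_adj a 0 3 (by decide) (by decide)⟩
        · exact ⟨(a, 2), h2, vert_adj a 1 2 (by decide) (by decide)⟩
        · exact ⟨(a, 3), h3, vert_adj a 2 3 (by decide) (by decide)⟩
        · exact ⟨(a, 2), h2, vert_adj a 3 2 (by decide) (by decide)⟩
    · -- i odd, i ≠ n-1, so both i-1 and i+1 are columns < n, one ≡0, one ≡2 mod 4
      have h1n : i - 1 < n := by omega
      have h2n : i + 1 < n := by omega
      set c₁ : ZMod n := ((i - 1 : ℕ) : ZMod n) with hc₁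
      set c₂ : ZMod n := ((i + 1 : ℕ) : ZMod n) with hc₂
      have hv₁ : c₁.val = i - 1 := ZMod.val_cast_of_lt h1n
      have hv₂ : c₂.val = i + 1 := ZMod.val_cast_of_lt h2n
      have ha : ((i : ℕ) : ZMod n) = a := by rw [hi, ZMod.natCast_val, ZMod.cast_id]
      have hadj₁ : ∀ r : ZMod 4, (torusGraph n 4).Adj (a, r) (c₁, r) := by
        intro r
        constructor
        · intro hcontra
          have hac : a = c₁ := congrArg Prod.fst hcontra
          have h' : a.val = i - 1 := by rw [hac, hv₁]
          omega
        · right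
          refine ⟨rfl, Or.inl ?_⟩
          show a = c₁ + 1
          rw [← ha, hc₁]
          have : ((i - 1 : ℕ) : ZMod n) + 1 = ((i - 1 + 1 : ℕ) : ZMod n) := by push_cast; ring
          rw [this]
          congr 1
          omega
      have hadj₂ : ∀ r : ZMod 4, (torusGraph n 4).Adj (a, r) (c₂, r) := by
        intro r
        constructor
        · intro hcontra
          have hac : a = c₂ := congrArg Prod.fst hcontra
          have h' : a.val = i + 1 := by rw [hac, hv₂]
          omega
        · right
          refine ⟨rfl, Or.inr ?_⟩
          show c₂ = a + 1
          rw [← ha, hc₂]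
          push_cast
          ring
      -- one of c₁, c₂ is ≡ 0 mod 4 and the other ≡ 2 mod 4
      obtain ⟨c, hcadj, hc0, c', hcadj', hc2⟩ :
          ∃ c, (∀ r : ZMod 4, (torusGraph n 4).Adj (a, r) (c, r)) ∧ c.val % 4 = 0 ∧
          ∃ c', (∀ r : ZMod 4, (torusGraph n 4).Adj (a, r) (c', r)) ∧ c'.val % 4 = 2 := by
        rcases (by omega : i % 4 = 1 ∨ i % 4 = 3) with h4 | h4
        · exact ⟨c₁, hadj₁, by omega, c₂, hadj₂, by omega⟩
        · exact ⟨c₂, hadj₂, by omega, c₁, hadj₁, by omega⟩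
      rcases zmod4_cases b with rfl | rfl | rfl | rfl
      · exact ⟨(c, 0), by rw [hmem]; left; exact ⟨hc0, Or.inl rfl⟩, hcadj 0⟩
      · exact ⟨(c, 1), by rw [hmem]; left; exact ⟨hc0, Or.inr rfl⟩, hcadj 1⟩
      · exact ⟨(c', 2), by rw [hmem]; right; left; exact ⟨hc2, Or.inl rfl⟩, hcadj' 2⟩
      · exact ⟨(c', 3), by rw [hmem]; right; left; exact ⟨hc2, Or.inr rfl⟩, hcadj' 3⟩

/-- The perfect matching on the induced subgraph. -/
def Mmatch (n : ℕ) (hn : 6 ≤ n) (h : n % 4 = 2) :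
    ((torusGraph n 4).induce (Dset n)).Subgraph where
  verts := Set.univ
  Adj x y := x.1.1 = y.1.1 ∧ y.1.2 = sigma4 x.1.2
  adj_sub := by
    rintro x y ⟨h1, h2⟩
    show (torusGraph n 4).Adj x.1 y.1
    constructor
    · intro hcontra
      have hr : x.1.2 = y.1.2 := congrArg Prod.snd hcontra
      rw [h2] at hr
      revert hr
      rcases zmod4_cases x.1.2 with h' | h' | h' | h' <;> rw [h'] <;> decide
    · left
      refine ⟨h1, ?_⟩
      rw [h2]
      rcases zmod4_cases x.1.2 with h' | h' | h' | h' <;> rw [h'] <;> decide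
  symm := by
    constructor
    rintro x y ⟨h1, h2⟩
    refine ⟨h1.symm, ?_⟩
    rw [h2]
    rcases zmod4_cases x.1.2 with h' | h' | h' | h' <;> rw [h'] <;> rfl
  edge_vert := by intro v w _; trivial

lemma Mmatch_perfect (n : ℕ) (hn : 6 ≤ n) (h : n % 4 = 2) :
    (Mmatch n hn h).IsPerfectMatching := by
  constructor
  · rintro ⟨p, hp⟩ _
    refine ⟨⟨(p.1, sigma4 p.2), Dset_sigma_closed hn h hp⟩, ⟨rfl, rfl⟩, ?_⟩
    rintro ⟨q, hq⟩ ⟨h1, h2⟩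
    apply Subtype.ext
    exact Prod.ext h1.symm h2
  · intro v; trivial

include hn h in
lemma Dset_ncard : (Dset n).ncard = n + 2 := by
  have hnz : NeZero n := ⟨by omega⟩
  rw [Dset, Set.ncard_coe_finset, Finset.card_image_of_injOn, Finset.card_range]
  intro k₁ hk₁ k₂ hk₂ heq
  simp only [Finset.mem_coe, Finset.mem_range] at hk₁ hk₂
  unfold gfun at heq
  by_cases h1 : k₁ < n <;> by_cases h2 : k₂ < n
  · rw [if_pos h1, if_pos h2] at heq
    have hcol : ((2 * (k₁ / 2) : ℕ) : ZMod n) = ((2 * (k₂ / 2) : ℕ) : ZMod n) :=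
      congrArg Prod.fst heq
    have hrow : ((2 * ((k₁ / 2) % 2) + k₁ % 2 : ℕ) : ZMod 4)
        = ((2 * ((k₂ / 2) % 2) + k₂ % 2 : ℕ) : ZMod 4) := congrArg Prod.snd heq
    have hc : 2 * (k₁ / 2) = 2 * (k₂ / 2) := by
      have e1 : (((2 * (k₁ / 2) : ℕ) : ZMod n)).val = 2 * (k₁ / 2) :=
        ZMod.val_cast_of_lt (by omega)
      have e2 : (((2 * (k₂ / 2) : ℕ) : ZMod n)).val = 2 * (k₂ / 2) :=
        ZMod.val_cast_of_lt (by omega)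
      rw [← e1, ← e2, hcol]
    have hr : 2 * ((k₁ / 2) % 2) + k₁ % 2 = 2 * ((k₂ / 2) % 2) + k₂ % 2 := by
      have e1 : (((2 * ((k₁ / 2) % 2) + k₁ % 2 : ℕ) : ZMod 4)).val
          = 2 * ((k₁ / 2) % 2) + k₁ % 2 := ZMod.val_cast_of_lt (by omega)
      have e2 : (((2 * ((k₂ / 2) % 2) + k₂ % 2 : ℕ) : ZMod 4)).val
          = 2 * ((k₂ / 2) % 2) + k₂ % 2 := ZMod.val_cast_of_lt (by omega)
      rw [← e1, ← e2, hrow]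
    omega
  · rw [if_pos h1, if_neg h2] at heq
    exfalso
    have hcol : ((2 * (k₁ / 2) : ℕ) : ZMod n) = ((n - 1 : ℕ) : ZMod n) :=
      congrArg Prod.fst heq
    have e1 : (((2 * (k₁ / 2) : ℕ) : ZMod n)).val = 2 * (k₁ / 2) :=
      ZMod.val_cast_of_lt (by omega)
    have e2 : (((n - 1 : ℕ) : ZMod n)).val = n - 1 := ZMod.val_cast_of_lt (by omega)
    have : 2 * (k₁ / 2) = n - 1 := by rw [← e1, ← e2, hcol]
    omega
  · rw [if_neg h1, if_pos h2] at heq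
    exfalso
    have hcol : ((n - 1 : ℕ) : ZMod n) = ((2 * (k₂ / 2) : ℕ) : ZMod n) :=
      congrArg Prod.fst heq
    have e1 : (((2 * (k₂ / 2) : ℕ) : ZMod n)).val = 2 * (k₂ / 2) :=
      ZMod.val_cast_of_lt (by omega)
    have e2 : (((n - 1 : ℕ) : ZMod n)).val = n - 1 := ZMod.val_cast_of_lt (by omega)
    have : n - 1 = 2 * (k₂ / 2) := by rw [← e2, ← e1, hcol]
    omega
  · rw [if_neg h1, if_neg h2] at heq
    have hrow : ((k₁ - n + 2 : ℕ) : ZMod 4) = ((k₂ - n + 2 : ℕ) : ZMod 4) :=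
      congrArg Prod.snd heq
    have e1 : (((k₁ - n + 2 : ℕ) : ZMod 4)).val = k₁ - n + 2 :=
      ZMod.val_cast_of_lt (by omega)
    have e2 : (((k₂ - n + 2 : ℕ) : ZMod 4)).val = k₂ - n + 2 :=
      ZMod.val_cast_of_lt (by omega)
    have : k₁ - n + 2 = k₂ - n + 2 := by rw [← e1, ← e2, hrow]
    omega

end Facts

theorem stmt6 (n : ℕ) (hn : 6 ≤ n) (h : n % 4 = 2) :
    pairedDomNum (torusGraph n 4) ≤ n + 2 := by
  apply Nat.sInf_le
  refine ⟨Dset n, ⟨?_, ⟨Mmatch n hn h, Mmatch_perfect n hn h⟩⟩, Dset_ncard hn h⟩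
  intro v _
  exact Dset_total_dom hn h v
end

section
/- Let D be a total dominating set of C_n × C_4 with n ≥ 5, and for each i (mod n) let Y_i = {x_{ij} : 1 ≤ j ≤ 4} be the i-th column and H_i^4 = Y_i ∪ Y_{i+1} ∪ Y_{i+2} ∪ Y_{i+3}. Then |D ∩ H_i^4| ≥ 4 for every i. -/
open SimpleGraph

section Aux

set_option synthInstance.maxSize 2000 in
set_option synthInstance.maxHeartbeats 1000000 in
set_option maxHeartbeats 2000000 in
private lemma abs4' : ∀ a b c : Fin 4 × ZMod 4,
    ¬ ((∀ r : ZMod 4,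
          ((1, r+1) = a ∨ (1, r+1) = b ∨ (1, r+1) = c) ∨
          ((1, r-1) = a ∨ (1, r-1) = b ∨ (1, r-1) = c) ∨
          ((0, r) = a ∨ (0, r) = b ∨ (0, r) = c) ∨
          ((2, r) = a ∨ (2, r) = b ∨ (2, r) = c)) ∧
       (∀ r : ZMod 4,
          ((2, r+1) = a ∨ (2, r+1) = b ∨ (2, r+1) = c) ∨
          ((2, r-1) = a ∨ (2, r-1) = b ∨ (2, r-1) = c) ∨
          ((1, r) = a ∨ (1, r) = b ∨ (1, r) = c) ∨
          ((3, r) = a ∨ (3, r) = b ∨ (3, r) = c))) := by decide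

end Aux

theorem stmt7 (n : ℕ) (hn : 5 ≤ n) (D : Set (ZMod n × ZMod 4))
    (hD : IsTotalDomSet (torusGraph n 4) D) :
    ∀ i : ZMod n,
      4 ≤ {v ∈ D | v.1 = i ∨ v.1 = i + 1 ∨ v.1 = i + 2 ∨ v.1 = i + 3}.ncard := by
  haveI : NeZero n := ⟨by omega⟩
  -- small nonzero numerals in `ZMod n`
  have hnz : ∀ k : ℕ, 0 < k → k < n → (k : ZMod n) ≠ 0 := by
    intro k hk hkn h
    have hv := ZMod.val_cast_of_lt hkn
    rw [h, ZMod.val_zero] at hv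
    omega
  have h1 : (1 : ZMod n) ≠ 0 := by
    have := hnz 1 (by omega) (by omega); simpa using this
  have h2 : (2 : ZMod n) ≠ 0 := by
    have := hnz 2 (by omega) (by omega); simpa using this
  have h3 : (3 : ZMod n) ≠ 0 := by
    have := hnz 3 (by omega) (by omega); simpa using this
  intro i
  by_contra hlt
  push_neg at hlt
  set W : Set (ZMod n × ZMod 4) :=
    {v ∈ D | v.1 = i ∨ v.1 = i + 1 ∨ v.1 = i + 2 ∨ v.1 = i + 3} with hWdef
  have hfin : W.Finite := Set.toFinite _
  have hcard : hfin.toFinset.card ≤ 3 := by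
    have := Set.ncard_eq_toFinset_card W hfin
    omega
  have hcardU : 3 ≤ (Finset.univ : Finset (ZMod n × ZMod 4)).card := by
    rw [Finset.card_univ, Fintype.card_prod, ZMod.card, ZMod.card]
    nlinarith
  obtain ⟨t, hsub, -, ht3⟩ :=
    Finset.exists_subsuperset_card_eq (hfin.toFinset.subset_univ) hcard hcardU
  obtain ⟨a, b, c, -, -, -, rfl⟩ := Finset.card_eq_three.mp ht3
  have hmem : ∀ u : ZMod n × ZMod 4, u ∈ D →
      (u.1 = i ∨ u.1 = i + 1 ∨ u.1 = i + 2 ∨ u.1 = i + 3) →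
      (u = a ∨ u = b ∨ u = c) := by
    intro u hu hcol
    have : u ∈ ({a, b, c} : Finset (ZMod n × ZMod 4)) :=
      hsub (hfin.mem_toFinset.mpr ⟨hu, hcol⟩)
    simpa [Finset.mem_insert, Finset.mem_singleton] using this
  -- column distinctness
  have ne10 : i + 1 ≠ i := fun h => h1 (by linear_combination h)
  have ne20 : i + 2 ≠ i := fun h => h2 (by linear_combination h)
  have ne30 : i + 3 ≠ i := fun h => h3 (by linear_combination h)
  have ne21 : i + 2 ≠ i + 1 := fun h => h1 (by linear_combination h)
  have ne31 : i + 3 ≠ i + 1 := fun h => h2 (by linear_combination h)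
  have ne32 : i + 3 ≠ i + 2 := fun h => h1 (by linear_combination h)
  -- the abstraction map on columns
  set g : ZMod n → Fin 4 := fun x =>
    if x = i then 0 else if x = i + 1 then 1 else if x = i + 2 then 2 else 3 with hg
  have gi0 : g i = 0 := by simp [hg]
  have gi1 : g (i + 1) = 1 := by simp [hg, ne10]
  have gi2 : g (i + 2) = 2 := by simp [hg, ne20, ne21]
  have gi3 : g (i + 3) = 3 := by simp [hg, ne30, ne31, ne32]
  set ψ : ZMod n × ZMod 4 → Fin 4 × ZMod 4 := fun p => (g p.1, p.2) with hψ
  -- transfer of membership along ψ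
  have map3 : ∀ p : ZMod n × ZMod 4, (p = a ∨ p = b ∨ p = c) →
      (ψ p = ψ a ∨ ψ p = ψ b ∨ ψ p = ψ c) := by
    rintro p (rfl | rfl | rfl)
    · exact Or.inl rfl
    · exact Or.inr (Or.inl rfl)
    · exact Or.inr (Or.inr rfl)
  have key : ∀ (m : ZMod n) (r : ZMod 4), m = i + 1 ∨ m = i + 2 →
      ((m, r + 1) = a ∨ (m, r + 1) = b ∨ (m, r + 1) = c) ∨
      ((m, r - 1) = a ∨ (m, r - 1) = b ∨ (m, r - 1) = c) ∨
      ((m - 1, r) = a ∨ (m - 1, r) = b ∨ (m - 1, r) = c) ∨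
      ((m + 1, r) = a ∨ (m + 1, r) = b ∨ (m + 1, r) = c) := by
    intro m r hm
    obtain ⟨⟨u1, u2⟩, huD, hadj⟩ := hD (m, r)
    have hor := hadj.2
    dsimp only at hor
    have hcols : ∀ x : ZMod n, x = m - 1 ∨ x = m ∨ x = m + 1 →
        x = i ∨ x = i + 1 ∨ x = i + 2 ∨ x = i + 3 := by
      rintro x (rfl | rfl | rfl) <;> rcases hm with rfl | rfl
      · left; rw [add_sub_cancel_right]
      · right; left; rw [add_sub_assoc]; norm_num
      · right; left; rfl
      · right; right; left; rfl
      · right; right; left; rw [add_assoc]; norm_num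
      · right; right; right; rw [add_assoc]; norm_num
    rcases hor with ⟨hc, hr⟩ | ⟨hr, hc⟩
    · -- vertical neighbor: u1 = m
      rcases hr with hr | hr
      · -- r = u2 + 1, so u2 = r - 1
        have hu2 : u2 = r - 1 := eq_sub_of_add_eq hr.symm
        have : (m, r - 1) = a ∨ (m, r - 1) = b ∨ (m, r - 1) = c := by
          have := hmem (u1, u2) huD (hcols u1 (Or.inr (Or.inl hc.symm)))
          rwa [hc, ← hu2]
        exact Or.inr (Or.inl this)
      · -- u2 = r + 1
        have : (m, r + 1) = a ∨ (m, r + 1) = b ∨ (m, r + 1) = c := by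
          have := hmem (u1, u2) huD (hcols u1 (Or.inr (Or.inl hc.symm)))
          rwa [hc, ← hr]
        exact Or.inl this
    · -- horizontal neighbor: u2 = r
      rcases hc with hc | hc
      · -- m = u1 + 1, so u1 = m - 1
        have hu1 : u1 = m - 1 := eq_sub_of_add_eq hc.symm
        have : (m - 1, r) = a ∨ (m - 1, r) = b ∨ (m - 1, r) = c := by
          have := hmem (u1, u2) huD (hcols u1 (Or.inl hu1))
          rwa [← hu1, hr]
        exact Or.inr (Or.inr (Or.inl this))
      · -- u1 = m + 1
        have : (m + 1, r) = a ∨ (m + 1, r) = b ∨ (m + 1, r) = c := by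
          have := hmem (u1, u2) huD (hcols u1 (Or.inr (Or.inr hc)))
          rwa [← hc, hr]
        exact Or.inr (Or.inr (Or.inr this))
  -- column arithmetic
  have e1sub : i + 1 - 1 = i := by rw [add_sub_cancel_right]
  have e1add : i + 1 + 1 = i + 2 := by rw [add_assoc]; norm_num
  have e2sub : i + 2 - 1 = i + 1 := by rw [add_sub_assoc]; norm_num
  have e2add : i + 2 + 1 = i + 3 := by rw [add_assoc]; norm_num
  refine abs4' (ψ a) (ψ b) (ψ c) ⟨?_, ?_⟩
  · intro r
    have hk := key (i + 1) r (Or.inl rfl)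
    rw [e1sub, e1add] at hk
    rcases hk with h | h | h | h
    · refine Or.inl ?_
      have := map3 _ h
      simpa [hψ, gi1] using this
    · refine Or.inr (Or.inl ?_)
      have := map3 _ h
      simpa [hψ, gi1] using this
    · refine Or.inr (Or.inr (Or.inl ?_))
      have := map3 _ h
      simpa [hψ, gi0] using this
    · refine Or.inr (Or.inr (Or.inr ?_))
      have := map3 _ h
      simpa [hψ, gi2] using this
  · intro r
    have hk := key (i + 2) r (Or.inr rfl)
    rw [e2sub, e2add] at hk
    rcases hk with h | h | h | h
    · refine Or.inl ?_
      have := map3 _ h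
      simpa [hψ, gi2] using this
    · refine Or.inr (Or.inl ?_)
      have := map3 _ h
      simpa [hψ, gi2] using this
    · refine Or.inr (Or.inr (Or.inl ?_))
      have := map3 _ h
      simpa [hψ, gi1] using this
    · refine Or.inr (Or.inr (Or.inr ?_))
      have := map3 _ h
      simpa [hψ, gi3] using this
end

section
/- For all n ≥ 3 and m ≥ 3, the total domination number satisfies γ_t(C_n × C_m) ≤ γ_t(C_{n+1} × C_m). -/
open SimpleGraph

lemma tg_univ_total (N m : ℕ) (hm : 3 ≤ m) :
    IsTotalDomSet (torusGraph N m) Set.univ := by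
  haveI : Fact (1 < m) := ⟨by omega⟩
  intro v
  refine ⟨(v.1, v.2 + 1), Set.mem_univ _, ?_, Or.inl ⟨rfl, Or.inr rfl⟩⟩
  intro h
  have h2 : v.2 = v.2 + 1 := congrArg Prod.snd h
  exact one_ne_zero ((left_eq_add).mp h2)

lemma tg_key (n m : ℕ) (hn : 3 ≤ n) (hm : 3 ≤ m)
    (D : Set (ZMod (n+1) × ZMod m)) (hD : IsTotalDomSet (torusGraph (n+1) m) D) :
    ∃ D' : Set (ZMod n × ZMod m),
      IsTotalDomSet (torusGraph n m) D' ∧ D'.ncard ≤ D.ncard := by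
  classical
  haveI : NeZero n := ⟨by omega⟩
  haveI : NeZero m := ⟨by omega⟩
  haveI : Fact (1 < n) := ⟨by omega⟩
  haveI : Fact (1 < m) := ⟨by omega⟩
  set f : ZMod (n+1) → ZMod n :=
    fun x => (((if x.val = n then n - 1 else x.val) : ℕ) : ZMod n) with hf
  set F : ZMod (n+1) × ZMod m → ZMod n × ZMod m := fun p => (f p.1, p.2) with hF
  set B : Set (ZMod n × ZMod m) :=
    {q | q.1 = ((n-2 : ℕ) : ZMod n) ∧ (((n-1 : ℕ) : ZMod (n+1)), q.2) ∈ D ∧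
      (((n : ℕ) : ZMod (n+1)), q.2) ∈ D} with hB
  have vlt : ∀ k : ℕ, k < n + 1 → ((k : ZMod (n+1))).val = k :=
    fun k h => ZMod.val_cast_of_lt h
  have vltn : ∀ k : ℕ, k < n → ((k : ZMod n)).val = k :=
    fun k h => ZMod.val_cast_of_lt h
  have f_lt : ∀ k : ℕ, k < n → f ((k : ZMod (n+1))) = (k : ZMod n) := by
    intro k hk
    simp only [hf, vlt k (by omega), Nat.ne_of_lt hk, if_false]
  have f_n : f ((n : ℕ) : ZMod (n+1)) = ((n-1:ℕ) : ZMod n) := by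
    simp only [hf, vlt n (by omega), if_true]
  have acast : ∀ a : ZMod n, ((a.val : ℕ) : ZMod n) = a := fun a => by
    simp [ZMod.natCast_val, ZMod.cast_id]
  refine ⟨F '' D ∪ B, ?_, ?_⟩
  · -- total domination
    rintro ⟨a, j⟩
    have hav : a.val < n := ZMod.val_lt a
    set a' : ZMod (n+1) := ((a.val : ℕ) : ZMod (n+1)) with ha'
    obtain ⟨u, huD, hne, hadj⟩ := hD (a', j)
    obtain ⟨u1, u2⟩ := u
    rcases hadj with ⟨h1, h2⟩ | ⟨h1, h2⟩
    · -- vertical neighbor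
      dsimp at h1 h2
      refine ⟨(a, u2), Or.inl ⟨(u1, u2), huD, ?_⟩, ?_, Or.inl ⟨rfl, h2⟩⟩
      · show (f u1, u2) = (a, u2)
        rw [← h1, ha', f_lt a.val hav, acast]
      · intro hEq
        have hj : j = u2 := congrArg Prod.snd hEq
        exact hne (Prod.ext h1 hj)
    · -- horizontal neighbor
      dsimp at h1 h2
      rcases h2 with h2 | h2
      · -- a' = u1 + 1 : u is the left neighbor
        by_cases hz : a.val = 0
        · -- u1 = n
          have hu1 : u1 = ((n:ℕ) : ZMod (n+1)) := by
            have hc : ((n:ℕ) : ZMod (n+1)) + 1 = a' := by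
              rw [ha', hz, ← Nat.cast_add_one, ZMod.natCast_self]
              simp
            exact (add_right_cancel (hc.trans h2)).symm
          refine ⟨(((n-1:ℕ) : ZMod n), j),
            Or.inl ⟨(u1, u2), huD, ?_⟩, ?_, Or.inr ⟨rfl, Or.inl ?_⟩⟩
          · show (f u1, u2) = _
            rw [hu1, f_n, ← h1]
          · intro hEq
            have hfst : a = ((n-1:ℕ) : ZMod n) := congrArg Prod.fst hEq
            have : a.val = n - 1 := by rw [hfst, vltn _ (by omega)]
            omega
          · show a = ((n-1:ℕ) : ZMod n) + 1
            rw [← Nat.cast_add_one]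
            have h9 : ((n-1:ℕ)+1 : ℕ) = n := by omega
            rw [h9, ZMod.natCast_self]
            have := acast a
            rw [hz] at this
            simpa using this.symm
        · -- u1 = a.val - 1
          have hu1 : u1 = ((a.val - 1 : ℕ) : ZMod (n+1)) := by
            have hc : ((a.val - 1:ℕ) : ZMod (n+1)) + 1 = a' := by
              rw [ha', ← Nat.cast_add_one]
              congr 1
              omega
            exact (add_right_cancel (hc.trans h2)).symm
          refine ⟨(((a.val - 1:ℕ) : ZMod n), j),
            Or.inl ⟨(u1, u2), huD, ?_⟩, ?_, Or.inr ⟨rfl, Or.inl ?_⟩⟩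
          · show (f u1, u2) = _
            rw [hu1, f_lt _ (by omega), ← h1]
          · intro hEq
            have hfst : a = ((a.val - 1:ℕ) : ZMod n) := congrArg Prod.fst hEq
            have : a.val = a.val - 1 := by
              conv_lhs => rw [hfst]
              rw [vltn _ (by omega)]
            omega
          · show a = ((a.val - 1:ℕ) : ZMod n) + 1
            rw [← Nat.cast_add_one]
            have h9 : ((a.val - 1:ℕ)+1 : ℕ) = a.val := by omega
            rw [h9, acast]
      · -- u1 = a' + 1 : u is the right neighbor
        by_cases hz : a.val + 1 < n
        · have hu1 : u1 = ((a.val + 1 : ℕ) : ZMod (n+1)) := by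
            rw [h2, ha', Nat.cast_add_one]
          refine ⟨(((a.val + 1:ℕ) : ZMod n), j),
            Or.inl ⟨(u1, u2), huD, ?_⟩, ?_, Or.inr ⟨rfl, Or.inr ?_⟩⟩
          · show (f u1, u2) = _
            rw [hu1, f_lt _ hz, ← h1]
          · intro hEq
            have hfst : a = ((a.val + 1:ℕ) : ZMod n) := congrArg Prod.fst hEq
            have : a.val = a.val + 1 := by
              conv_lhs => rw [hfst]
              rw [vltn _ hz]
            omega
          · show ((a.val + 1:ℕ) : ZMod n) = a + 1
            rw [Nat.cast_add_one, acast]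
        · -- a.val = n - 1 : the bad case
          have hav1 : a.val = n - 1 := by omega
          have hu1 : u1 = ((n : ℕ) : ZMod (n+1)) := by
            rw [h2, ha', ← Nat.cast_add_one]
            congr 1
            omega
          have huD' : (((n : ℕ) : ZMod (n+1)), j) ∈ D := by
            have heq : (u1, u2) = (((n : ℕ) : ZMod (n+1)), j) := Prod.ext hu1 h1.symm
            rwa [heq] at huD
          obtain ⟨w, hwD, wne, wadj⟩ := hD ((((n : ℕ) : ZMod (n+1))), j)
          obtain ⟨w1, w2⟩ := w
          have ha_eq : a = ((n-1:ℕ) : ZMod n) := by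
            rw [← acast a, hav1]
          rcases wadj with ⟨g1, g2⟩ | ⟨g1, g2⟩
          · -- vertical neighbor of (n, j)
            dsimp at g1 g2
            refine ⟨(((n-1:ℕ) : ZMod n), w2),
              Or.inl ⟨(w1, w2), hwD, ?_⟩, ?_, Or.inl ⟨ha_eq, g2⟩⟩
            · show (f w1, w2) = _
              rw [← g1, f_n]
            · intro hEq
              have hsnd : j = w2 := congrArg Prod.snd hEq
              rcases g2 with g2 | g2
              · rw [hsnd] at g2; exact one_ne_zero ((left_eq_add).mp g2)
              · rw [← hsnd] at g2; exact one_ne_zero ((left_eq_add).mp g2)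
          · -- horizontal neighbor of (n, j)
            dsimp at g1 g2
            rcases g2 with g2 | g2
            · -- n = w1 + 1, so w1 = n - 1 : patch case
              have hw1 : w1 = ((n - 1 : ℕ) : ZMod (n+1)) := by
                have hc : ((n - 1:ℕ) : ZMod (n+1)) + 1 = ((n:ℕ) : ZMod (n+1)) := by
                  rw [← Nat.cast_add_one]
                  congr 1
                  omega
                exact (add_right_cancel (hc.trans g2)).symm
              have hwD' : (((n-1 : ℕ) : ZMod (n+1)), j) ∈ D := by
                have heq : (w1, w2) = (((n-1 : ℕ) : ZMod (n+1)), j) := Prod.ext hw1 g1.symm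
                rwa [heq] at hwD
              refine ⟨(((n-2:ℕ) : ZMod n), j),
                Or.inr ⟨rfl, hwD', huD'⟩, ?_, Or.inr ⟨rfl, Or.inl ?_⟩⟩
              · intro hEq
                have hfst : a = ((n-2:ℕ) : ZMod n) := congrArg Prod.fst hEq
                have : a.val = n - 2 := by rw [hfst, vltn _ (by omega)]
                omega
              · show a = ((n-2:ℕ) : ZMod n) + 1
                rw [ha_eq, ← Nat.cast_add_one]
                congr 1
                omega
            · -- w1 = n + 1 = 0
              have hw1 : w1 = ((0 : ℕ) : ZMod (n+1)) := by
                rw [g2, ← Nat.cast_add_one, ZMod.natCast_self]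
                simp
              refine ⟨(((0:ℕ) : ZMod n), j),
                Or.inl ⟨(w1, w2), hwD, ?_⟩, ?_, Or.inr ⟨rfl, Or.inr ?_⟩⟩
              · show (f w1, w2) = _
                rw [hw1, f_lt _ (by omega), ← g1]
              · intro hEq
                have hfst : a = ((0:ℕ) : ZMod n) := congrArg Prod.fst hEq
                have : a.val = 0 := by rw [hfst, vltn _ (by omega)]
                omega
              · show ((0:ℕ) : ZMod n) = a + 1
                rw [ha_eq, ← Nat.cast_add_one]
                have h9 : ((n-1:ℕ)+1 : ℕ) = n := by omega
                rw [h9, ZMod.natCast_self]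
                simp
  · -- cardinality
    set h : ZMod (n+1) × ZMod m → ZMod n × ZMod m := fun p =>
      if p.1 = ((n:ℕ) : ZMod (n+1)) ∧ (((n-1:ℕ) : ZMod (n+1)), p.2) ∈ D then
        (((n-2:ℕ) : ZMod n), p.2) else F p with hh
    have h_pos : ∀ x : ZMod (n+1) × ZMod m, x.1 = ((n:ℕ) : ZMod (n+1)) →
        (((n-1:ℕ) : ZMod (n+1)), x.2) ∈ D → h x = (((n-2:ℕ) : ZMod n), x.2) := by
      intro x hx1 hx2
      simp only [hh]
      rw [if_pos ⟨hx1, hx2⟩]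
    have h_neg : ∀ x : ZMod (n+1) × ZMod m,
        ¬ (x.1 = ((n:ℕ) : ZMod (n+1)) ∧ (((n-1:ℕ) : ZMod (n+1)), x.2) ∈ D) → h x = F x := by
      intro x hx
      simp only [hh]
      rw [if_neg hx]
    have hsub : F '' D ∪ B ⊆ h '' D := by
      rintro q (⟨p, hp, rfl⟩ | hq)
      · by_cases hc : p.1 = ((n:ℕ) : ZMod (n+1)) ∧ (((n-1:ℕ) : ZMod (n+1)), p.2) ∈ D
        · refine ⟨((((n-1:ℕ) : ZMod (n+1))), p.2), hc.2, ?_⟩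
          have hcond : ¬ ((((n-1:ℕ) : ZMod (n+1)), p.2).1 = ((n:ℕ) : ZMod (n+1)) ∧
              (((n-1:ℕ) : ZMod (n+1)), (((n-1:ℕ) : ZMod (n+1)), p.2).2) ∈ D) := by
            intro hcc
            have hcc1 : ((n-1:ℕ) : ZMod (n+1)) = ((n:ℕ) : ZMod (n+1)) := hcc.1
            have hv : ((n-1:ℕ) : ZMod (n+1)).val = n - 1 := vlt _ (by omega)
            have hv2 : ((n:ℕ) : ZMod (n+1)).val = n := vlt _ (by omega)
            rw [hcc1, hv2] at hv
            omega
          rw [h_neg _ hcond]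
          show (f ((n-1:ℕ) : ZMod (n+1)), p.2) = (f p.1, p.2)
          rw [hc.1, f_n, f_lt _ (by omega)]
        · exact ⟨p, hp, h_neg p hc⟩
      · obtain ⟨hq1, hq2, hq3⟩ := hq
        refine ⟨((((n:ℕ)) : ZMod (n+1)), q.2), hq3, ?_⟩
        rw [h_pos _ rfl hq2]
        exact Prod.ext hq1.symm rfl
    calc (F '' D ∪ B).ncard ≤ (h '' D).ncard :=
          Set.ncard_le_ncard hsub (Set.toFinite _)
      _ ≤ D.ncard := Set.ncard_image_le (Set.toFinite _)

theorem stmt11 (n m : ℕ) (hn : 3 ≤ n) (hm : 3 ≤ m) :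
    totalDomNum (torusGraph n m) ≤ totalDomNum (torusGraph (n + 1) m) := by
  haveI : NeZero (n+1) := ⟨by omega⟩
  haveI : NeZero m := ⟨by omega⟩
  have hS : {k | ∃ D : Set (ZMod (n+1) × ZMod m),
      IsTotalDomSet (torusGraph (n+1) m) D ∧ D.ncard = k}.Nonempty :=
    ⟨_, Set.univ, tg_univ_total (n+1) m hm, rfl⟩
  obtain ⟨D, hD, hcard⟩ := Nat.sInf_mem hS
  obtain ⟨D', hD', hle⟩ := tg_key n m hn hm D hD
  calc totalDomNum (torusGraph n m) ≤ D'.ncard := Nat.sInf_le ⟨D', hD', rfl⟩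
    _ ≤ D.ncard := hle
    _ = totalDomNum (torusGraph (n + 1) m) := hcard
end
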